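/- arXiv:2402.03489 — 3 statements merged into one kernel-verified Lean document; each statement's English description precedes it below -/
import Mathlib

section
/- Assume that (μ(n), n ≥ 1) is non-increasing and that μ has finite type d < ∞. Let X₀ be a locally finite configuration with front at position 0 (i.e. max{j : X₀(j) ≠ 0} = 0), and for δ < 0 let X₀^{(δ)} be the configuration defined by X₀^{(δ)}(j) := X₀(j) for j ≠ δ and X₀^{(δ)}(δ) := ∞. Then for any δ, k ∈ ℤ with δ + d < k ≤ 0, the IBM(μ) started from X₀^{(δ)} satisfies P(X_∞^{(δ)}(k) = X₀^{(δ)}(k)) > 0, i.e. with positive probability no ball is ever added to bin k. -/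
open MeasureTheory ProbabilityTheory Filter Set
open scoped ENNReal Topology Classical

noncomputable section

/-- A configuration of balls: the number of balls (in `ℤ₊ ∪ {∞}`) in each bin. -/
abbrev Config := ℤ → ℕ∞

/-- A valid configuration: the support is nonempty and bounded above. -/
def IsConfig (X : Config) : Prop :=
  (∃ j, X j ≠ 0) ∧ ∃ M : ℤ, ∀ j, X j ≠ 0 → j ≤ M

/-- `tailSum X j = ∑_{i ≥ j} X i`. -/
def tailSum (X : Config) (j : ℤ) : ℕ∞ :=
  ⨆ m : ℤ, ∑ i ∈ Finset.Icc j m, X i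

/-- One step of the infinite-bin model dynamics: `Phi ξ X` adds one ball to the bin
immediately to the right of the bin containing the `ξ`-th rightmost ball of `X`
(i.e. to bin `B(X,ξ) + 1` where `B(X,ξ) = sup {j : ∑_{i ≥ j} X i ≥ ξ}`), and does
nothing when `B(X,ξ) = -∞`, i.e. when no bin `j` satisfies `∑_{i ≥ j} X i ≥ ξ`. -/
def Phi (ξ : ℕ) (X : Config) : Config := fun j =>
  X j + (if (ξ : ℕ∞) ≤ tailSum X (j - 1) ∧ ¬ (ξ : ℕ∞) ≤ tailSum X j then 1 else 0)

/-- The infinite-bin model driven by the sequence `ξ`, started from `X₀`: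
`X_{n+1} = Phi (ξ n) X_n`. -/
def ibm (X₀ : Config) (ξ : ℕ → ℕ) : ℕ → Config
  | 0 => X₀
  | n + 1 => Phi (ξ n) (ibm X₀ ξ n)

/-- `X_∞(k)`: the limit (= supremum, by monotonicity) of the number of balls in bin `k`. -/
def ibmLimit (X₀ : Config) (ξ : ℕ → ℕ) (k : ℤ) : ℕ∞ :=
  ⨆ n, ibm X₀ ξ n k

/-- `ξ` is a sequence of i.i.d. random variables with law `μ` on `(Ω, P)`. -/
def IsIIDSeq {Ω : Type*} [MeasurableSpace Ω] (P : Measure Ω) (μ : Measure ℕ)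
    (ξ : ℕ → Ω → ℕ) : Prop :=
  (∀ n, Measurable (ξ n)) ∧
    iIndepFun ξ P ∧ ∀ n, P.map (ξ n) = μ

/-- The barrier configuration `X̂₀`: an infinite bin at `0`, all other bins empty. -/
def barrier : Config := fun j => if j = 0 then ⊤ else 0

/-- The tail `μ̄(j) = μ({j, j+1, ...})` of a distribution on `ℕ`. -/
def tailμ (μ : Measure ℕ) (j : ℕ) : ℝ≥0∞ := μ {i | j ≤ i}

/-- `μ` (represented by the i.i.d. driving sequence `ξ` on `(Ω, P)`) is of type `d`:
almost surely, `d = inf {k ≥ 1 : X̂_∞(k) < ∞}` for the IBM started from the barrier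
configuration (with `inf ∅ = ∞` in `ℕ ∪ {∞}`). -/
def IsTypeOf {Ω : Type*} [MeasurableSpace Ω] (P : Measure Ω) (ξ : ℕ → Ω → ℕ)
    (d : ℕ∞) : Prop :=
  ∀ᵐ ω ∂P, sInf {k : ℕ∞ | ∃ m : ℕ, 1 ≤ m ∧ k = (m : ℕ∞) ∧
    ibmLimit barrier (fun i => ξ i ω) (m : ℤ) < ⊤} = d

/-- `δ ∈ ℤ ∪ {-∞}` is the position `δ(X) = sup {j : X j = ∞}` of the rightmost
infinite bin ("barrier") of `X`, with `sup ∅ = -∞ = ⊥`. -/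
def IsRightmostBarrier (X : Config) (δ : WithBot ℤ) : Prop :=
  (∀ j : ℤ, X j = ⊤ → (j : WithBot ℤ) ≤ δ) ∧
    (∀ j : ℤ, (j : WithBot ℤ) ≤ δ → ∃ i : ℤ, j ≤ i ∧ X i = ⊤)

end

noncomputable section
namespace S13
set_option linter.unusedSectionVars false


/-- supp bound: `X i = 0` for `i > M`. -/
def SuppLE (X : Config) (M : ℤ) : Prop := ∀ i : ℤ, M < i → X i = 0

lemma tailSum_eq_sum {X : Config} {M : ℤ} (hM : SuppLE X M) (j : ℤ) :
    tailSum X j = ∑ i ∈ Finset.Icc j M, X i := by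
  apply le_antisymm
  · apply iSup_le
    intro m
    rw [show (∑ i ∈ Finset.Icc j m, X i) = ∑ i ∈ Finset.Icc j m ∩ Finset.Icc j M, X i by
      refine (Finset.sum_subset (Finset.inter_subset_left) ?_).symm
      intro x hx hx'
      simp only [Finset.mem_inter, Finset.mem_Icc] at hx hx'
      exact hM x (by omega)]
    exact Finset.sum_le_sum_of_subset Finset.inter_subset_right
  · exact le_iSup (fun m => ∑ i ∈ Finset.Icc j m, X i) M

lemma tailSum_antitone {X : Config} {j j' : ℤ} (h : j ≤ j') : tailSum X j' ≤ tailSum X j := by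
  apply iSup_le
  intro m
  exact le_trans (Finset.sum_le_sum_of_subset (Finset.Icc_subset_Icc_left h))
    (le_iSup (fun m => ∑ i ∈ Finset.Icc j m, X i) m)

lemma tailSum_split {X : Config} {M : ℤ} (hM : SuppLE X M) {j : ℤ} (hj : j ≤ M) :
    tailSum X j = X j + tailSum X (j + 1) := by
  rw [tailSum_eq_sum hM j, tailSum_eq_sum hM (j+1)]
  have : Finset.Icc j M = insert j (Finset.Icc (j+1) M) := by
    ext x; simp only [Finset.mem_Icc, Finset.mem_insert]; omega
  rw [this, Finset.sum_insert (by simp only [Finset.mem_Icc]; omega)]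

lemma tailSum_zero_of_gt {X : Config} {M : ℤ} (hM : SuppLE X M) {j : ℤ} (hj : M < j) :
    tailSum X j = 0 := by
  rw [tailSum_eq_sum hM j, Finset.Icc_eq_empty (by omega), Finset.sum_empty]

/-- The main step formula for tail sums. -/
lemma tailSum_phi {X : Config} {M : ℤ} (hM : SuppLE X M) {j₀ : ℤ} (hj₀ : tailSum X j₀ = ⊤)
    {ξ : ℕ} (hξ : 1 ≤ ξ) (j : ℤ) :
    tailSum (Phi ξ X) j
      = tailSum X j + (if (ξ : ℕ∞) ≤ tailSum X (j - 1) then 1 else 0) := by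
  -- the set of candidate B's
  have hSne : ∃ z : ℤ, (ξ : ℕ∞) ≤ tailSum X z := ⟨j₀, by rw [hj₀]; exact le_top⟩
  have hSbd : ∀ z : ℤ, (ξ : ℕ∞) ≤ tailSum X z → z ≤ M := by
    intro z hz
    by_contra h
    rw [tailSum_zero_of_gt hM (by omega)] at hz
    simp only [nonpos_iff_eq_zero, Nat.cast_eq_zero] at hz
    omega
  obtain ⟨B, hB, hBmax⟩ := Int.exists_greatest_of_bdd ⟨M, hSbd⟩ hSne
  -- downward closure
  have hdc : ∀ z : ℤ, z ≤ B → (ξ : ℕ∞) ≤ tailSum X z :=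
    fun z hz => le_trans hB (tailSum_antitone hz)
  have hiff : ∀ i : ℤ, ((ξ : ℕ∞) ≤ tailSum X (i - 1) ∧ ¬ (ξ : ℕ∞) ≤ tailSum X i) ↔ i = B + 1 := by
    intro i
    constructor
    · rintro ⟨h1, h2⟩
      have := hBmax _ h1
      have : ¬ (i ≤ B) := fun hc => h2 (hdc _ hc)
      omega
    · rintro rfl
      exact ⟨by simpa using hB, fun hc => by have := hBmax _ hc; omega⟩
  have hPhi : Phi ξ X = fun i => X i + (if i = B + 1 then 1 else 0) := by
    funext i
    simp only [Phi]
    congr 1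
    by_cases h : i = B + 1
    · rw [if_pos ((hiff i).mpr h), if_pos h]
    · rw [if_neg (fun hc => h ((hiff i).mp hc)), if_neg h]
  have hBM : B ≤ M := hSbd _ hB
  have hM' : SuppLE (Phi ξ X) (M + 1) := by
    intro i hi
    rw [hPhi]
    simp only
    rw [hM i (by omega), if_neg (by omega), add_zero]
  rw [tailSum_eq_sum hM' j, hPhi]
  have hMM : SuppLE X (M+1) := fun i hi => hM i (by omega)
  rw [Finset.sum_add_distrib, ← tailSum_eq_sum hMM j]
  congr 1
  rw [Finset.sum_ite_eq' (Finset.Icc j (M+1)) (B+1) (fun _ => (1:ℕ∞))]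
  have : (ξ : ℕ∞) ≤ tailSum X (j - 1) ↔ j ≤ B + 1 := by
    constructor
    · intro h; have := hBmax _ h; omega
    · intro h; exact hdc _ (by omega)
  by_cases h : j ≤ B + 1
  · rw [if_pos (by simp only [Finset.mem_Icc]; omega), if_pos (this.mpr h)]
  · rw [if_neg (by simp only [Finset.mem_Icc]; omega), if_neg (fun hc => h (this.mp hc))]




abbrev Path := ℕ → ℕ

def OnePath (η : Path) : Prop := ∀ i, 1 ≤ η i

structure Nice (Z : Config) (δ₀ : ℤ) : Prop where
  bdd : ∃ M : ℤ, SuppLE Z M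
  top : tailSum Z δ₀ = ⊤

/-- tail sums along the trajectory -/
def T (Z : Config) (η : Path) (n : ℕ) (j : ℤ) : ℕ∞ := tailSum (ibm Z η n) j

lemma suppLE_phi {X : Config} {M : ℤ} (hM : SuppLE X M) (ξ : ℕ) :
    SuppLE (Phi ξ X) (M + 1) := by
  intro i hi
  unfold Phi
  rw [hM i (by omega)]
  rcases Nat.eq_zero_or_pos ξ with h0 | h1
  · subst h0
    simp
  · rw [if_neg, add_zero]
    rw [tailSum_zero_of_gt hM (j := i - 1) (by omega)]
    rintro ⟨h, -⟩
    simp only [nonpos_iff_eq_zero, Nat.cast_eq_zero] at h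
    omega

lemma ibm_suppLE {Z : Config} {δ₀ : ℤ} (hZ : Nice Z δ₀) (η : Path) (n : ℕ) :
    ∃ M : ℤ, SuppLE (ibm Z η n) M := by
  induction n with
  | zero => exact hZ.bdd
  | succ n ih =>
    obtain ⟨M, hM⟩ := ih
    exact ⟨M + 1, suppLE_phi hM (η n)⟩

lemma nice_ibm {Z : Config} {δ₀ : ℤ} (hZ : Nice Z δ₀) {η : Path} (hη : OnePath η) (n : ℕ) :
    Nice (ibm Z η n) δ₀ := by
  constructor
  · exact ibm_suppLE hZ η n
  · show T Z η n δ₀ = ⊤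
    induction n with
    | zero => exact hZ.top
    | succ n ih =>
      obtain ⟨M, hM⟩ := ibm_suppLE hZ η n
      show tailSum (Phi (η n) (ibm Z η n)) δ₀ = ⊤
      have ih' : tailSum (ibm Z η n) δ₀ = ⊤ := ih
      rw [tailSum_phi hM ih' (hη n) δ₀, ih']
      simp

lemma ibm_top {Z : Config} {δ₀ : ℤ} (hZ : Nice Z δ₀) {η : Path} (hη : OnePath η) (n : ℕ) :
    T Z η n δ₀ = ⊤ := (nice_ibm hZ hη n).top

lemma Trec {Z : Config} {δ₀ : ℤ} (hZ : Nice Z δ₀) {η : Path} (hη : OnePath η) (n : ℕ) (j : ℤ) :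
    T Z η (n + 1) j = T Z η n j + (if (η n : ℕ∞) ≤ T Z η n (j - 1) then 1 else 0) := by
  obtain ⟨M, hM⟩ := ibm_suppLE hZ η n
  exact tailSum_phi hM (ibm_top hZ hη n) (hη n) j

lemma T_antitone {Z : Config} {η : Path} {n : ℕ} {j j' : ℤ} (h : j ≤ j') :
    T Z η n j' ≤ T Z η n j := tailSum_antitone h

lemma T_mono {Z : Config} {δ₀ : ℤ} (hZ : Nice Z δ₀) {η : Path} (hη : OnePath η)
    {n n' : ℕ} (h : n ≤ n') (j : ℤ) : T Z η n j ≤ T Z η n' j := by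
  induction n' with
  | zero => simp_all
  | succ m ih =>
    rcases Nat.lt_or_ge n (m+1) with h' | h'
    · exact le_trans (ih (by omega)) (by rw [Trec hZ hη m j]; exact le_self_add)
    · have : n = m + 1 := by omega
      subst this; rfl

lemma T_le_add {Z : Config} {δ₀ : ℤ} (hZ : Nice Z δ₀) {η : Path} (hη : OnePath η)
    (n : ℕ) (j : ℤ) : T Z η n j ≤ tailSum Z j + n := by
  induction n with
  | zero => simp [T, ibm]
  | succ n ih =>
    rw [Trec hZ hη n j]
    have h1 : (if (η n : ℕ∞) ≤ T Z η n (j-1) then (1:ℕ∞) else 0) ≤ 1 := by split <;> simp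
    calc T Z η n j + (if (η n : ℕ∞) ≤ T Z η n (j-1) then (1:ℕ∞) else 0)
        ≤ (tailSum Z j + n) + 1 := add_le_add ih h1
      _ = tailSum Z j + ((n:ℕ∞) + 1) := by ring
      _ = tailSum Z j + ((n+1 : ℕ) : ℕ∞) := by push_cast; ring

lemma T_fin {Z : Config} {δ₀ : ℤ} (hZ : Nice Z δ₀) {η : Path} (hη : OnePath η)
    {j : ℤ} (hj : tailSum Z j ≠ ⊤) (n : ℕ) : T Z η n j ≠ ⊤ := by
  intro h
  have := T_le_add hZ hη n j
  rw [h] at this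
  have : tailSum Z j + (n:ℕ∞) = ⊤ := top_le_iff.mp this
  have hn : (n : ℕ∞) ≠ ⊤ := by simp
  rw [ENat.add_eq_top] at this
  tauto

/-- hit at bin `k` at step `n` -/
def HitAt (Z : Config) (η : Path) (k : ℤ) (n : ℕ) : Prop :=
  (η n : ℕ∞) ≤ T Z η n (k - 1) ∧ ¬ (η n : ℕ∞) ≤ T Z η n k

lemma ibm_bin_rec (Z : Config) (η : Path) (k : ℤ) (n : ℕ) :
    ibm Z η (n + 1) k = ibm Z η n k + (if HitAt Z η k n then 1 else 0) := by
  show Phi (η n) (ibm Z η n) k = _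
  unfold Phi HitAt T
  congr 1
  by_cases h : (η n : ℕ∞) ≤ tailSum (ibm Z η n) (k-1) ∧ ¬ (η n : ℕ∞) ≤ tailSum (ibm Z η n) k
  · rw [if_pos h, if_pos h]
  · rw [if_neg h, if_neg h]

lemma ibm_bin_eq_cnt (Z : Config) (η : Path) (k : ℤ) (n : ℕ) :
    ibm Z η n k = Z k + ((Finset.range n).filter (HitAt Z η k)).card := by
  induction n with
  | zero => simp [ibm]
  | succ n ih =>
    rw [ibm_bin_rec, ih, Finset.range_add_one, Finset.filter_insert]
    split
    · rw [Finset.card_insert_of_notMem (by simp)]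
      push_cast
      ring
    · simp

lemma ibmLimit_of_noHit {Z : Config} {η : Path} {k : ℤ} (h : ∀ n, ¬ HitAt Z η k n) :
    ibmLimit Z η k = Z k := by
  unfold ibmLimit
  have : ∀ n, ibm Z η n k = Z k := by
    intro n
    rw [ibm_bin_eq_cnt Z η k n, Finset.filter_false_of_mem (fun x _ => h x)]
    simp
  simp only [this, iSup_const]

lemma ibm_congr {Z : Config} {η η' : Path} {n : ℕ} (h : ∀ i, i < n → η i = η' i) :
    ibm Z η n = ibm Z η' n := by
  induction n with
  | zero => rfl
  | succ n ih =>
    show Phi (η n) (ibm Z η n) = Phi (η' n) (ibm Z η' n)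
    rw [ih (fun i hi => h i (by omega)), h n (by omega)]

lemma T_congr {Z : Config} {η η' : Path} {n : ℕ} (h : ∀ i, i < n → η i = η' i) (j : ℤ) :
    T Z η n j = T Z η' n j := by unfold T; rw [ibm_congr h]

lemma HitAt_congr {Z : Config} {η η' : Path} {k : ℤ} {n : ℕ} (h : ∀ i, i ≤ n → η i = η' i) :
    HitAt Z η k n ↔ HitAt Z η' k n := by
  unfold HitAt
  rw [T_congr (fun i hi => h i (by omega)) (k-1), T_congr (fun i hi => h i (by omega)) k,
    h n le_rfl]

lemma ibm_restart (Z : Config) (η : Path) (N n : ℕ) :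
    ibm Z η (N + n) = ibm (ibm Z η N) (fun i => η (N + i)) n := by
  induction n with
  | zero => rfl
  | succ n ih =>
    show Phi (η (N + n)) (ibm Z η (N + n)) = Phi (η (N + n)) (ibm (ibm Z η N) (fun i => η (N + i)) n)
    rw [ih]

/-- domination with a shift: barrier-type config `Z` (nice at 0) versus `Z'` (nice at `δ`),
if initially tails of `Z` at `i` are below tails of `Z'` at `δ + i` for `i ≥ 1`, this
persists. -/
lemma T_dom {Z Z' : Config} {δ : ℤ} (hZ : Nice Z 0) (hZ' : Nice Z' δ)
    {η : Path} (hη : OnePath η)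
    (h0 : ∀ i : ℤ, 1 ≤ i → tailSum Z i ≤ tailSum Z' (δ + i)) :
    ∀ n, ∀ i : ℤ, 1 ≤ i → T Z η n i ≤ T Z' η n (δ + i) := by
  intro n
  induction n with
  | zero => exact h0
  | succ n ih =>
    intro i hi
    rw [Trec hZ hη n i, Trec hZ' hη n (δ + i)]
    refine add_le_add (ih i hi) ?_
    have : (δ + i - 1) = δ + (i - 1) := by ring
    rw [this]
    rcases eq_or_lt_of_le hi with h1 | h1
    · have e1 : i - 1 = 0 := by omega
      have e2 : δ + (i-1) = δ := by omega
      rw [e2, e1, ibm_top hZ hη n, ibm_top hZ' hη n]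
    · have := ih (i - 1) (by omega)
      split
      · rw [if_pos (le_trans (by assumption) this)]
      · split <;> simp

/-- equal tails below `k` propagate, and hits at `k` coincide. -/
lemma T_propagate {Z Z' : Config} {δ₀ δ₀' : ℤ} (hZ : Nice Z δ₀) (hZ' : Nice Z' δ₀')
    {η : Path} (hη : OnePath η) {k : ℤ}
    (h0 : ∀ j : ℤ, j ≤ k → tailSum Z j = tailSum Z' j) :
    ∀ n, (∀ j : ℤ, j ≤ k → T Z η n j = T Z' η n j) := by
  intro n
  induction n with
  | zero => exact h0
  | succ n ih =>
    intro j hj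
    rw [Trec hZ hη n j, Trec hZ' hη n j, ih j hj, ih (j-1) (by omega)]

lemma HitAt_propagate {Z Z' : Config} {δ₀ δ₀' : ℤ} (hZ : Nice Z δ₀) (hZ' : Nice Z' δ₀')
    {η : Path} (hη : OnePath η) {k : ℤ}
    (h0 : ∀ j : ℤ, j ≤ k → tailSum Z j = tailSum Z' j) (n : ℕ) :
    HitAt Z η k n ↔ HitAt Z' η k n := by
  unfold HitAt
  rw [T_propagate hZ hZ' hη h0 n (k-1) (by omega), T_propagate hZ hZ' hη h0 n k le_rfl]

/-- the surgered path -/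
def surg (Z : Config) (η : Path) (k : ℤ) : Path :=
  fun n => if HitAt Z η k n then 1 else η n

lemma surg_onePath {Z : Config} {η : Path} {k : ℤ} (hη : OnePath η) :
    OnePath (surg Z η k) := by
  intro i
  unfold surg
  split <;> simp [hη i]

lemma surgery {Z : Config} {δ₀ : ℤ} (hZ : Nice Z δ₀) {η : Path} (hη : OnePath η)
    {k : ℤ} (hTk1 : 1 ≤ tailSum Z k) :
    (∀ n, ∀ j : ℤ, j ≤ k → T Z (surg Z η k) n j = T Z η n j)
    ∧ (∀ n, ¬ HitAt Z (surg Z η k) k n) := by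
  have hη' : OnePath (surg Z η k) := surg_onePath hη
  have key : ∀ n, ∀ j : ℤ, j ≤ k → T Z (surg Z η k) n j = T Z η n j := by
    intro n
    induction n with
    | zero => intro j _; rfl
    | succ n ih =>
      intro j hj
      rw [Trec hZ hη' n j, Trec hZ hη n j, ih j hj]
      congr 1
      by_cases h : HitAt Z η k n
      · -- both indicators are 1
        have h1 : (η n : ℕ∞) ≤ T Z η n (j - 1) :=
          le_trans h.1 (T_antitone (by omega))
        have h2 : (surg Z η k n : ℕ∞) ≤ T Z (surg Z η k) n (j - 1) := by
          rw [ih (j-1) (by omega)]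
          unfold surg
          rw [if_pos h]
          exact le_trans (by exact_mod_cast le_trans (by norm_num) (hη n)) h1
        rw [if_pos h1, if_pos (by exact_mod_cast h2)]
      · have : surg Z η k n = η n := by unfold surg; rw [if_neg h]
        rw [this, ih (j-1) (by omega)]
  refine ⟨key, fun n hhit => ?_⟩
  by_cases h : HitAt Z η k n
  · -- surgered value is 1, but T at k is ≥ 1
    have hv : surg Z η k n = 1 := by unfold surg; rw [if_pos h]
    have : ¬ ((surg Z η k n : ℕ∞) ≤ T Z (surg Z η k) n k) := hhit.2
    apply this
    rw [hv, key n k le_rfl]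
    calc ((1:ℕ):ℕ∞) ≤ tailSum Z k := by exact_mod_cast hTk1
    _ = T Z η 0 k := rfl
    _ ≤ T Z η n k := T_mono hZ hη (Nat.zero_le n) k
  · apply h
    have hv : surg Z η k n = η n := by unfold surg; rw [if_neg h]
    unfold HitAt at hhit ⊢
    rwa [key n (k-1) (by omega), key n k le_rfl, hv] at hhit





set_option linter.unusedSectionVars false

variable {Ω : Type*} [MeasurableSpace Ω] {P : Measure Ω} [IsProbabilityMeasure P]
  {μ : Measure ℕ} [IsProbabilityMeasure μ] {ξ : ℕ → Ω → ℕ}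

lemma measNat (A : Set ℕ) : MeasurableSet A := by trivial

/-- events defined through the driving path -/
def evt (ξ : ℕ → Ω → ℕ) (p : Path → Prop) : Set Ω := {ω | p (fun i => ξ i ω)}

/-- `p` depends only on coordinates in `[off, off+n)` -/
def DepOn (p : Path → Prop) (off n : ℕ) : Prop :=
  ∀ η η' : Path, (∀ i, off ≤ i → i < off + n → η i = η' i) → p η → p η'

def cylSet (ξ : ℕ → Ω → ℕ) (off n : ℕ) (b : ℕ → ℕ) : Set Ω :=
  {ω | ∀ i, i < n → ξ (off + i) ω = b i}

def relPath {n : ℕ} (a : Fin n → ℕ) : ℕ → ℕ := fun i => if h : i < n then a ⟨i, h⟩ else 1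

def absPath (off : ℕ) {n : ℕ} (a : Fin n → ℕ) : Path :=
  fun i => if h : off ≤ i ∧ i - off < n then a ⟨i - off, h.2⟩ else 1

lemma prodForm (h : IsIIDSeq P μ ξ) (S : Finset ℕ) (A : ℕ → Set ℕ) :
    P (⋂ i ∈ S, ξ i ⁻¹' A i) = ∏ i ∈ S, μ (A i) := by
  have := (iIndepFun_iff_measure_inter_preimage_eq_mul.mp h.2.1) S
    (sets := A) (fun i _ => measNat _)
  rw [this]
  exact Finset.prod_congr rfl fun i _ => by
    rw [← h.2.2 i, Measure.map_apply (h.1 i) (measNat _)]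

lemma cylSet_meas (h : IsIIDSeq P μ ξ) (off n : ℕ) (b : ℕ → ℕ) :
    MeasurableSet (cylSet ξ off n b) := by
  have : cylSet ξ off n b = ⋂ i ∈ Finset.range n, ξ (off + i) ⁻¹' {b i} := by
    ext ω
    simp [cylSet]
  rw [this]
  exact MeasurableSet.biInter (Finset.range n).countable_toSet
    (fun i _ => (h.1 (off + i)) (measNat _))

lemma cylSet_prob (h : IsIIDSeq P μ ξ) (off n : ℕ) (b : ℕ → ℕ) :
    P (cylSet ξ off n b) = ∏ i ∈ Finset.range n, μ {b i} := by
  have he : cylSet ξ off n b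
      = ⋂ i ∈ Finset.image (off + ·) (Finset.range n), ξ i ⁻¹' {b (i - off)} := by
    ext ω
    simp only [cylSet, Finset.mem_image, Finset.mem_range, Set.mem_iInter, Set.mem_setOf_eq,
      Set.mem_preimage, Set.mem_singleton_iff]
    constructor
    · rintro hω i ⟨j, hj, rfl⟩
      rw [Nat.add_sub_cancel_left]
      exact hω j hj
    · intro hω i hi
      have := hω (off + i) ⟨i, hi, rfl⟩
      rwa [Nat.add_sub_cancel_left] at this
  rw [he, prodForm h, Finset.prod_image (by intro x _ y _ hxy; simp only at hxy; omega)]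
  exact Finset.prod_congr rfl fun i _ => by rw [Nat.add_sub_cancel_left]

/-- decomposition of a window-dependent event into cylinders -/
lemma evt_eq_iUnion (p : Path → Prop) (off n : ℕ) (hp : DepOn p off n) :
    evt ξ p = ⋃ a : {a : Fin n → ℕ // p (absPath off a)}, cylSet ξ off n (relPath a.1) := by
  ext ω
  simp only [evt, Set.mem_setOf_eq, Set.mem_iUnion]
  constructor
  · intro hω
    refine ⟨⟨fun i => ξ (off + i.1) ω, ?_⟩, ?_⟩
    · refine hp _ _ (fun i h1 h2 => ?_) hω
      simp only [absPath]
      rw [dif_pos ⟨h1, by omega⟩]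
      congr 1
      omega
    · intro i hi
      simp only [relPath, dif_pos hi]
  · rintro ⟨⟨a, ha⟩, hcyl⟩
    refine hp _ _ (fun i h1 h2 => ?_) ha
    simp only [absPath]
    rw [dif_pos ⟨h1, by omega⟩]
    have := hcyl (i - off) (by omega)
    rw [show off + (i - off) = i by omega] at this
    rw [this]
    simp only [relPath]
    rw [dif_pos (by omega : i - off < n)]

lemma cylSet_disjoint {off n : ℕ} {b b' : ℕ → ℕ} (hbb : ∃ i < n, b i ≠ b' i) :
    Disjoint (cylSet ξ off n b) (cylSet ξ off n b') := by
  rw [Set.disjoint_iff_inter_eq_empty]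
  ext ω
  simp only [Set.mem_inter_iff, cylSet, Set.mem_setOf_eq, Set.mem_empty_iff_false,
    iff_false, not_and]
  intro h1 h2
  obtain ⟨i, hi, hne⟩ := hbb
  exact hne ((h1 i hi).symm.trans (h2 i hi))

lemma cyl_family_disj {off n : ℕ} {pred : (Fin n → ℕ) → Prop} :
    Pairwise (Function.onFun Disjoint fun a : {a : Fin n → ℕ // pred a} =>
      cylSet ξ off n (relPath a.1)) := by
  intro a a' haa
  apply cylSet_disjoint
  by_contra hc
  push_neg at hc
  apply haa
  refine Subtype.ext (funext fun i => ?_)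
  have := hc i.1 i.2
  simpa only [relPath, dif_pos i.2] using this

lemma evt_meas (h : IsIIDSeq P μ ξ) (p : Path → Prop) (off n : ℕ) (hp : DepOn p off n) :
    MeasurableSet (evt ξ p) := by
  rw [evt_eq_iUnion p off n hp]
  exact MeasurableSet.iUnion fun a => cylSet_meas h off n _

lemma evt_prob_tsum (h : IsIIDSeq P μ ξ) (p : Path → Prop) (off n : ℕ) (hp : DepOn p off n) :
    P (evt ξ p) = ∑' a : {a : Fin n → ℕ // p (absPath off a)},
      P (cylSet ξ off n (relPath a.1)) := by
  rw [evt_eq_iUnion p off n hp]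
  exact measure_iUnion cyl_family_disj (fun a => cylSet_meas h off n _)

/-- key independence lemma : events determined by disjoint windows multiply. -/
lemma block_mul (h : IsIIDSeq P μ ξ) (p q : Path → Prop) (N m : ℕ)
    (hp : DepOn p 0 N) (hq : DepOn q N m) :
    P (evt ξ p ∩ evt ξ q) = P (evt ξ p) * P (evt ξ q) := by
  rw [evt_eq_iUnion p 0 N hp, evt_eq_iUnion q N m hq]
  have hUU : (⋃ a : {a : Fin N → ℕ // p (absPath 0 a)}, cylSet ξ 0 N (relPath a.1))
      ∩ (⋃ a : {a : Fin m → ℕ // q (absPath N a)}, cylSet ξ N m (relPath a.1))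
      = ⋃ x : {a : Fin N → ℕ // p (absPath 0 a)} × {a : Fin m → ℕ // q (absPath N a)},
          (cylSet ξ 0 N (relPath x.1.1) ∩ cylSet ξ N m (relPath x.2.1)) := by
    ext ω
    simp only [Set.mem_inter_iff, Set.mem_iUnion]
    constructor
    · rintro ⟨⟨a, ha⟩, ⟨b, hb⟩⟩
      exact ⟨⟨a, b⟩, ha, hb⟩
    · rintro ⟨⟨a, b⟩, ha, hb⟩
      exact ⟨⟨a, ha⟩, ⟨b, hb⟩⟩
  rw [hUU]
  have hmeas : ∀ (x : {a : Fin N → ℕ // p (absPath 0 a)} × {a : Fin m → ℕ // q (absPath N a)}),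
      MeasurableSet (cylSet ξ 0 N (relPath x.1.1) ∩ cylSet ξ N m (relPath x.2.1)) :=
    fun x => (cylSet_meas h _ _ _).inter (cylSet_meas h _ _ _)
  rw [measure_iUnion ?_ hmeas]
  · -- each term is a product
    have hterm : ∀ (x : {a : Fin N → ℕ // p (absPath 0 a)} × {a : Fin m → ℕ // q (absPath N a)}),
        P (cylSet ξ 0 N (relPath x.1.1) ∩ cylSet ξ N m (relPath x.2.1))
          = P (cylSet ξ 0 N (relPath x.1.1)) * P (cylSet ξ N m (relPath x.2.1)) := by
      rintro ⟨⟨a, ha⟩, ⟨b, hb⟩⟩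
      have hset : cylSet ξ 0 N (relPath a) ∩ cylSet ξ N m (relPath b)
          = cylSet ξ 0 (N + m) (fun i => if i < N then relPath a i else relPath b (i - N)) := by
        ext ω
        simp only [Set.mem_inter_iff, cylSet, Set.mem_setOf_eq]
        constructor
        · rintro ⟨h1, h2⟩ i hi
          by_cases hiN : i < N
          · rw [if_pos hiN]; simpa using h1 i hiN
          · rw [if_neg hiN]
            have := h2 (i - N) (by omega)
            rw [show N + (i - N) = 0 + i by omega] at this
            exact this
        · intro h1
          constructor
          · intro i hi
            have := h1 i (by omega)
            rw [if_pos hi] at this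
            exact this
          · intro i hi
            have := h1 (N + i) (by omega)
            rw [if_neg (by omega), show N + i - N = i by omega] at this
            rw [show 0 + (N + i) = N + i by omega] at this
            exact this
      rw [hset, cylSet_prob h, cylSet_prob h, cylSet_prob h,
        Finset.prod_range_add]
      congr 1
      · exact Finset.prod_congr rfl fun i hi =>
          by rw [if_pos (Finset.mem_range.mp hi)]
      · exact Finset.prod_congr rfl fun i _ =>
          by rw [if_neg (by omega), Nat.add_sub_cancel_left]
    rw [tsum_congr hterm, ENNReal.tsum_prod']
    simp only [ENNReal.tsum_mul_left, ENNReal.tsum_mul_right]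
    congr 1
    · exact (measure_iUnion cyl_family_disj (fun a => cylSet_meas h _ _ _)).symm
    · exact (measure_iUnion cyl_family_disj (fun a => cylSet_meas h _ _ _)).symm
  · -- pairwise disjoint
    rintro ⟨a, b⟩ ⟨a', b'⟩ hne
    have : a ≠ a' ∨ b ≠ b' := by
      by_contra hc
      push_neg at hc
      exact hne (by rw [hc.1, hc.2])
    rcases this with hne' | hne'
    · exact Disjoint.mono (Set.inter_subset_left) (Set.inter_subset_left)
        (cyl_family_disj hne')
    · exact Disjoint.mono (Set.inter_subset_right) (Set.inter_subset_right)
        (cyl_family_disj hne')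



set_option linter.unusedSectionVars false

variable {Ω : Type*} [MeasurableSpace Ω] {P : Measure Ω} [IsProbabilityMeasure P]
  {μ : Measure ℕ} [IsProbabilityMeasure μ] {ξ : ℕ → Ω → ℕ}


lemma pre_prob (h : IsIIDSeq P μ ξ) (n : ℕ) (A : Set ℕ) : P (ξ n ⁻¹' A) = μ A := by
  rw [← h.2.2 n, Measure.map_apply (h.1 n) (measNat _)]

lemma prodForm_off (h : IsIIDSeq P μ ξ) (off n : ℕ) (A : ℕ → Set ℕ) :
    P (⋂ i ∈ Finset.range n, ξ (off + i) ⁻¹' A i) = ∏ i ∈ Finset.range n, μ (A i) := by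
  have he : (⋂ i ∈ Finset.range n, ξ (off + i) ⁻¹' A i)
      = ⋂ i ∈ Finset.image (off + ·) (Finset.range n), ξ i ⁻¹' A (i - off) := by
    ext ω
    simp only [Set.mem_iInter, Finset.mem_image, Finset.mem_range]
    constructor
    · rintro hω i ⟨j, hj, rfl⟩
      rw [Nat.add_sub_cancel_left]
      exact hω j hj
    · intro hω i hi
      have := hω (off + i) ⟨i, hi, rfl⟩
      rwa [Nat.add_sub_cancel_left] at this
  rw [he, prodForm h, Finset.prod_image (by intro x _ y _ hxy; simp only at hxy; omega)]
  exact Finset.prod_congr rfl fun i _ => by rw [Nat.add_sub_cancel_left]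

lemma measure_setOf_ge (a : ℕ) : μ {x : ℕ | a ≤ x} = ∑' s : ℕ, μ {a + s} := by
  have : {x : ℕ | a ≤ x} = ⋃ s : ℕ, {a + s} := by
    ext x
    simp only [Set.mem_setOf_eq, Set.mem_iUnion, Set.mem_singleton_iff]
    exact ⟨fun hx => ⟨x - a, by omega⟩, by rintro ⟨s, rfl⟩; omega⟩
  rw [this, measure_iUnion ?_ (fun s => measNat _)]
  intro s s' hss
  simp only [Set.disjoint_iff_inter_eq_empty]
  ext x
  simp only [Set.mem_inter_iff, Set.mem_singleton_iff, Set.mem_empty_iff_false, iff_false,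
    not_and]
  rintro rfl h
  exact hss (by omega)

lemma tau_tendsto : Tendsto (fun a : ℕ => μ {x : ℕ | a ≤ x}) atTop (𝓝 0) := by
  have h1 : ∀ a : ℕ, μ {x : ℕ | a ≤ x} = ∑' s : ℕ, (fun x => μ {x}) (s + a) := by
    intro a
    rw [measure_setOf_ge a]
    exact tsum_congr fun s => by rw [Nat.add_comm]
  have h2 : (fun a : ℕ => μ {x : ℕ | a ≤ x}) = fun a => ∑' s : ℕ, (fun x => μ {x}) (s + a) :=
    funext h1
  rw [h2]
  apply ENNReal.tendsto_sum_nat_add (fun x => μ {x})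
  have : (⋃ s : ℕ, ({s} : Set ℕ)) = Set.univ := by
    ext x; simp
  intro hc
  have h2 : μ (Set.univ : Set ℕ) = ∑' s : ℕ, μ {s} := by
    rw [← this]
    refine measure_iUnion ?_ (fun s => measNat _)
    intro s s' hss
    simp only [Set.disjoint_iff_inter_eq_empty]
    ext x
    simp only [Set.mem_inter_iff, Set.mem_singleton_iff, Set.mem_empty_iff_false, iff_false,
      not_and]
    rintro rfl h
    exact hss h
  rw [measure_univ] at h2
  rw [← h2] at hc
  exact (by norm_num : (1:ℝ≥0∞) ≠ ⊤) hc

lemma null_exists_zero (h : IsIIDSeq P μ ξ) (hμ0 : μ {0} = 0) :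
    P {ω | ∃ n, ξ n ω = 0} = 0 := by
  have : {ω | ∃ n, ξ n ω = 0} = ⋃ n, ξ n ⁻¹' {0} := by
    ext ω; simp [Set.mem_iUnion]
  rw [this]
  refine le_antisymm (le_trans (measure_iUnion_le _) ?_) zero_le
  simp only [pre_prob h _ _, hμ0, tsum_zero, le_refl]

lemma null_no_ones (h : IsIIDSeq P μ ξ) (hμ1 : μ {1} ≠ 0) :
    P {ω | ∃ n₀, ∀ n, n₀ ≤ n → ξ n ω ≠ 1} = 0 := by
  have key : ∀ n₀, P {ω | ∀ n, n₀ ≤ n → ξ n ω ≠ 1} = 0 := by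
    intro n₀
    have hM : ∀ M : ℕ, P {ω | ∀ n, n₀ ≤ n → ξ n ω ≠ 1} ≤ (μ ({1}ᶜ)) ^ M := by
      intro M
      have hsub : {ω | ∀ n, n₀ ≤ n → ξ n ω ≠ 1}
          ⊆ ⋂ i ∈ Finset.range M, ξ (n₀ + i) ⁻¹' ({1}ᶜ : Set ℕ) := by
        intro ω hω
        simp only [Set.mem_iInter, Set.mem_preimage, Set.mem_compl_iff,
          Set.mem_singleton_iff]
        intro i _
        exact hω (n₀ + i) (by omega)
      refine le_trans (measure_mono hsub) ?_
      rw [prodForm_off h n₀ M, Finset.prod_const, Finset.card_range]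
    have hlt : μ ({1}ᶜ) < 1 := by
      have hcompl := measure_add_measure_compl (μ := μ) (measNat {1})
      rw [measure_univ] at hcompl
      rcases lt_or_eq_of_le (prob_le_one (μ := μ) (s := {1}ᶜ)) with hlt | heq
      · exact hlt
      · exfalso
        apply hμ1
        have h2 : μ {1} + 1 = 1 := by rw [heq] at hcompl; exact hcompl
        have h3 : μ {1} + 1 ≤ 0 + 1 := by rw [h2, zero_add]
        simpa using ENNReal.le_of_add_le_add_right (by norm_num : (1:ℝ≥0∞) ≠ ⊤) h3
    have htend : Tendsto (fun M => (μ ({1}ᶜ)) ^ M) atTop (𝓝 0) :=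
      ENNReal.tendsto_pow_atTop_nhds_zero_of_lt_one hlt
    have := ge_of_tendsto' htend (fun M => hM M)
    exact le_antisymm this zero_le
  have : {ω | ∃ n₀, ∀ n, n₀ ≤ n → ξ n ω ≠ 1}
      = ⋃ n₀, {ω | ∀ n, n₀ ≤ n → ξ n ω ≠ 1} := by
    ext ω; simp [Set.mem_iUnion]
  rw [this]
  refine le_antisymm (le_trans (measure_iUnion_le _) ?_) zero_le
  simp only [key, tsum_zero, le_refl]



set_option linter.unusedSectionVars false

variable {Ω : Type*} [MeasurableSpace Ω] {P : Measure Ω} [IsProbabilityMeasure P]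
  {μ : Measure ℕ} [IsProbabilityMeasure μ] {ξ : ℕ → Ω → ℕ}

/-- padding a path with 1's beyond `m` -/
def pad (η : Path) (m : ℕ) : Path := fun i => if i < m then η i else 1

lemma pad_agree (η : Path) (m : ℕ) : ∀ i, i < m → pad η m i = η i :=
  fun i hi => by simp [pad, hi]

lemma pad_onePath {η : Path} {m : ℕ} (h : ∀ i, i < m → 1 ≤ η i) : OnePath (pad η m) := by
  intro i
  unfold pad
  split
  · exact h i (by assumption)
  · exact le_refl 1

section BC

variable (v : Path → ℕ → ℕ∞) (bad : Path → ℕ → Prop) (C : ℕ)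
variable (hv_dep : ∀ η η' : Path, ∀ n, (∀ i, i < n → η i = η' i) → v η n = v η' n)
  (hv_mono : ∀ η : Path, OnePath η → ∀ n, v η n ≤ v η (n+1))
  (hv_fin : ∀ η : Path, OnePath η → ∀ n, v η n ≠ ⊤)
  (hstay : ∀ η : Path, OnePath η → ∀ n, v η (n+1) = v η n → v η n < (η n : ℕ∞))
  (hbad_dep : ∀ η η' : Path, ∀ n, (∀ i, i ≤ n → η i = η' i) → bad η n → bad η' n)
  (hwin : ∀ η : Path, OnePath η → ∀ n, bad η n →
      v η n < (η n : ℕ∞) ∧ (η n : ℕ∞) ≤ v η n + C)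

include hv_dep hv_mono in
lemma v_mono' {η : Path} {a b : ℕ} (h1 : ∀ i, i < b → 1 ≤ η i) (hab : a ≤ b) :
    v η a ≤ v η b := by
  have hp : OnePath (pad η b) := pad_onePath h1
  have hm : Monotone (v (pad η b)) := monotone_nat_of_le_succ (hv_mono _ hp)
  calc v η a = v (pad η b) a := hv_dep _ _ a (fun i hi => (pad_agree η b i (by omega)).symm)
    _ ≤ v (pad η b) b := hm hab
    _ = v η b := hv_dep _ _ b (fun i hi => pad_agree η b i hi)

include hv_dep hstay in
lemma v_stay' {η : Path} {n : ℕ} (h1 : ∀ i, i < n + 1 → 1 ≤ η i)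
    (he : v η (n+1) = v η n) : v η n < (η n : ℕ∞) := by
  have hp : OnePath (pad η (n+1)) := pad_onePath h1
  have e1 : v (pad η (n+1)) n = v η n := hv_dep _ _ n (fun i hi => pad_agree η (n+1) i (by omega))
  have e2 : v (pad η (n+1)) (n+1) = v η (n+1) := hv_dep _ _ (n+1) (fun i hi => pad_agree η (n+1) i hi)
  have := hstay _ hp n (by rw [e1, e2, he])
  rwa [e1, pad_agree η (n+1) n (by omega)] at this

include hv_dep hbad_dep hwin in
lemma v_win' {η : Path} {n : ℕ} (h1 : ∀ i, i < n + 1 → 1 ≤ η i) (hb : bad η n) :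
    v η n < (η n : ℕ∞) ∧ (η n : ℕ∞) ≤ v η n + C := by
  have hp : OnePath (pad η (n+1)) := pad_onePath h1
  have e1 : v (pad η (n+1)) n = v η n := hv_dep _ _ n (fun i hi => pad_agree η (n+1) i (by omega))
  have hb' : bad (pad η (n+1)) n := hbad_dep _ _ n (fun i hi => (pad_agree η (n+1) i (by omega)).symm) hb
  have := hwin _ hp n hb'
  rwa [e1, pad_agree η (n+1) n (by omega)] at this

include hv_dep hv_fin in
lemma v_fin' {η : Path} {n : ℕ} (h1 : ∀ i, i < n → 1 ≤ η i) : v η n ≠ ⊤ := by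
  have hp : OnePath (pad η n) := pad_onePath h1
  have e1 : v (pad η n) n = v η n := hv_dep _ _ n (fun i hi => pad_agree η n i hi)
  rw [← e1]
  exact hv_fin _ hp n

/-- sojourn events -/
def Fev (ξ : ℕ → Ω → ℕ) (v : Path → ℕ → ℕ∞) (t n : ℕ) : Set Ω :=
  evt ξ (fun η => (∀ i, i < n → 1 ≤ η i) ∧ v η n = (t : ℕ∞))

def Uev (ξ : ℕ → Ω → ℕ) (v : Path → ℕ → ℕ∞) (t n : ℕ) : Set Ω :=
  evt ξ (fun η => (∀ i, i < n + 1 → 1 ≤ η i) ∧ v η n ≠ (t : ℕ∞) ∧ v η (n+1) = (t : ℕ∞))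

include hv_dep in
lemma Fev_dep (t n : ℕ) : DepOn (fun η => (∀ i, i < n → 1 ≤ η i) ∧ v η n = (t : ℕ∞)) 0 n := by
  rintro η η' hagr ⟨h1, h2⟩
  refine ⟨fun i hi => by rw [← hagr i (by omega) (by omega)]; exact h1 i hi, ?_⟩
  rw [← hv_dep η η' n (fun i hi => hagr i (by omega) (by omega))]
  exact h2

include hv_dep in
lemma Uev_dep (t n : ℕ) : DepOn (fun η => (∀ i, i < n + 1 → 1 ≤ η i) ∧ v η n ≠ (t : ℕ∞)
    ∧ v η (n+1) = (t : ℕ∞)) 0 (n+1) := by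
  rintro η η' hagr ⟨h1, h2, h3⟩
  have e1 := hv_dep η η' n (fun i hi => hagr i (by omega) (by omega))
  have e2 := hv_dep η η' (n+1) (fun i hi => hagr i (by omega) (by omega))
  exact ⟨fun i hi => by rw [← hagr i (by omega) (by omega)]; exact h1 i hi,
    by rw [← e1]; exact h2, by rw [← e2]; exact h3⟩

/-- `P (E ∩ {ξ n ∈ B}) = P E * μ B` for window events -/
lemma next_coord_mul (h : IsIIDSeq P μ ξ) (p : Path → Prop) (n : ℕ) (hp : DepOn p 0 n)
    (B : Set ℕ) : P (evt ξ p ∩ ξ n ⁻¹' B) = P (evt ξ p) * μ B := by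
  have hq : DepOn (fun η : Path => η n ∈ B) n 1 := by
    intro η η' hagr hη
    rw [← hagr n (by omega) (by omega)]
    exact hη
  have he : ξ n ⁻¹' B = evt ξ (fun η : Path => η n ∈ B) := rfl
  rw [he, block_mul h _ _ n 1 hp hq, ← he, pre_prob h n B]

include hv_dep hstay hv_mono in
lemma sojourn_step (h : IsIIDSeq P μ ξ) (t n : ℕ) :
    P (Fev ξ v t (n+1))
      ≤ P (Fev ξ v t n) * μ {s : ℕ | t < s} + P (Uev ξ v t n) := by
  have hsub : Fev ξ v t (n+1) ⊆ (Fev ξ v t n ∩ ξ n ⁻¹' {s : ℕ | t < s}) ∪ Uev ξ v t n := by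
    rintro ω ⟨h1, h2⟩
    set η : Path := fun i => ξ i ω with hη
    by_cases hc : v η n = (t : ℕ∞)
    · left
      refine ⟨⟨fun i hi => h1 i (by omega), hc⟩, ?_⟩
      have := v_stay' v hv_dep hstay (η := η) (n := n) (fun i hi => h1 i hi) (by rw [h2, hc])
      rw [hc] at this
      simp only [Set.mem_preimage, Set.mem_setOf_eq]
      exact_mod_cast this
    · right
      exact ⟨h1, hc, h2⟩
  refine le_trans (measure_mono hsub) (le_trans (measure_union_le _ _)
    (add_le_add ?_ le_rfl))
  unfold Fev
  exact le_of_eq (next_coord_mul h _ n (Fev_dep v hv_dep t n) {s : ℕ | t < s})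

include hv_dep hv_mono in
lemma Uev_disj (t : ℕ) : Pairwise (Function.onFun Disjoint fun n => Uev ξ v t n) := by
  have key : ∀ n m, n < m → Uev ξ v t n ∩ Uev ξ v t m = ∅ := by
    intro n m hnm
    ext ω
    simp only [Set.mem_inter_iff, Set.mem_empty_iff_false, iff_false, not_and]
    rintro ⟨h1, h2, h3⟩ ⟨h1', h2', h3'⟩
    set η : Path := fun i => ξ i ω
    have hle1 : v η (n+1) ≤ v η m :=
      v_mono' v hv_dep hv_mono (fun i hi => h1' i (by omega)) (by omega)
    have hle2 : v η m ≤ v η (m+1) :=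
      v_mono' v hv_dep hv_mono (fun i hi => h1' i hi) (by omega)
    rw [h3] at hle1
    rw [h3'] at hle2
    exact h2' (le_antisymm hle2 hle1)
  intro n m hnm
  rcases Nat.lt_or_ge n m with hlt | hge
  · simp only [Function.onFun, Set.disjoint_iff_inter_eq_empty]
    exact key n m hlt
  · have : m < n := by omega
    simp only [Function.onFun]
    rw [Set.disjoint_iff_inter_eq_empty, Set.inter_comm]
    exact key m n this

include hv_dep hv_mono hstay in
lemma sojourn (h : IsIIDSeq P μ ξ) (hμ1 : μ {1} ≠ 0) (t : ℕ) (ht : 1 ≤ t) :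
    ∑' n, P (Fev ξ v t n) ≤ 2 / μ {1} := by
  set q : ℝ≥0∞ := μ {s : ℕ | t < s} with hq
  set r : ℝ≥0∞ := μ {s : ℕ | s ≤ t} with hr
  have hqr : q + r = 1 := by
    have h2 := measure_add_measure_compl (μ := μ) (measNat {s : ℕ | t < s})
    rw [measure_univ] at h2
    have h3 : {s : ℕ | s ≤ t} = {s : ℕ | t < s}ᶜ := by ext s; simp [not_lt]
    rw [hq, hr, h3]
    exact h2
  have hr1 : μ {1} ≤ r := by
    apply measure_mono
    intro s hs
    simp only [Set.mem_singleton_iff] at hs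
    simp [hs, ht]
  -- partial sums
  have hpart : ∀ N, (∑ n ∈ Finset.range N, P (Fev ξ v t n)) * r ≤ 2 := by
    intro N
    have hbdd : (∑ n ∈ Finset.range N, P (Fev ξ v t n)) ≤ N := by
      calc (∑ n ∈ Finset.range N, P (Fev ξ v t n)) ≤ ∑ n ∈ Finset.range N, 1 :=
        Finset.sum_le_sum (fun i _ => prob_le_one)
      _ = N := by simp
    have hA : (∑ n ∈ Finset.range N, P (Fev ξ v t n))
        ≤ 2 + q * (∑ n ∈ Finset.range N, P (Fev ξ v t n)) := by
      rcases Nat.eq_zero_or_pos N with rfl | hN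
      · simp
      obtain ⟨M, rfl⟩ : ∃ M, N = M + 1 := ⟨N - 1, by omega⟩
      have step : ∑ n ∈ Finset.range M, P (Fev ξ v t (n+1))
          ≤ ∑ n ∈ Finset.range M, (P (Fev ξ v t n) * q + P (Uev ξ v t n)) :=
        Finset.sum_le_sum (fun n _ => sojourn_step v hv_dep hv_mono hstay h t n)
      rw [Finset.sum_add_distrib] at step
      have hUmeas : ∀ n : ℕ, MeasurableSet (Uev ξ v t n) :=
        fun n => evt_meas h _ 0 (n+1) (Uev_dep v hv_dep t n)
      have hU : ∑ n ∈ Finset.range M, P (Uev ξ v t n) ≤ 1 := by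
        rw [← measure_biUnion_finset (fun a _ b _ hab => Uev_disj v hv_dep hv_mono t hab)
          (fun n _ => hUmeas n)]
        exact prob_le_one
      calc ∑ n ∈ Finset.range (M+1), P (Fev ξ v t n)
          = ∑ n ∈ Finset.range M, P (Fev ξ v t (n+1)) + P (Fev ξ v t 0) :=
            Finset.sum_range_succ' _ _
        _ ≤ (∑ n ∈ Finset.range M, P (Fev ξ v t n) * q + 1) + 1 := by
            refine add_le_add (le_trans step (add_le_add le_rfl hU)) prob_le_one
        _ = 2 + (∑ n ∈ Finset.range M, P (Fev ξ v t n)) * q := by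
            rw [← Finset.sum_mul]
            ring
        _ ≤ 2 + (∑ n ∈ Finset.range (M+1), P (Fev ξ v t n)) * q := by
            refine add_le_add le_rfl (mul_le_mul_left ?_ q)
            exact Finset.sum_le_sum_of_subset (Finset.range_subset_range.mpr (by omega))
        _ = 2 + q * (∑ n ∈ Finset.range (M+1), P (Fev ξ v t n)) := by ring
    -- cancel
    set A := ∑ n ∈ Finset.range N, P (Fev ξ v t n) with hAdef
    have hfin : q * A ≠ ⊤ := by
      apply ENNReal.mul_ne_top
      · exact ne_top_of_le_ne_top (by norm_num) (le_trans (measure_mono (Set.subset_univ _)) (le_of_eq measure_univ))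
      · exact ne_top_of_le_ne_top (by simp) hbdd
    have : A * r + q * A ≤ 2 + q * A := by
      calc A * r + q * A = A * (q + r) := by ring
      _ = A := by rw [hqr, mul_one]
      _ ≤ 2 + q * A := hA
    exact ENNReal.le_of_add_le_add_right hfin this
  have htsum : (∑' n, P (Fev ξ v t n)) * r ≤ 2 := by
    rw [← ENNReal.tsum_mul_right, ENNReal.tsum_eq_iSup_sum]
    refine iSup_le ?_
    intro s
    rcases Finset.exists_nat_subset_range s with ⟨N, hN⟩
    calc ∑ n ∈ s, P (Fev ξ v t n) * r ≤ ∑ n ∈ Finset.range N, P (Fev ξ v t n) * r :=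
      Finset.sum_le_sum_of_subset hN
    _ = (∑ n ∈ Finset.range N, P (Fev ξ v t n)) * r := by rw [Finset.sum_mul]
    _ ≤ 2 := hpart N
  calc ∑' n, P (Fev ξ v t n) ≤ 2 / r := by
        rw [ENNReal.le_div_iff_mul_le (Or.inl ?_) (Or.inr (by norm_num))]
        · exact htsum
        · intro hr0
          rw [hr0] at hr1
          exact hμ1 (le_antisymm hr1 zero_le)
  _ ≤ 2 / μ {1} := ENNReal.div_le_div_left hr1 2


/-- window sets -/
def winSet (t C : ℕ) : Set ℕ := {x : ℕ | t < x ∧ x ≤ t + C}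

include hv_dep hv_mono hv_fin hstay hbad_dep hwin in
theorem bcstar (h : IsIIDSeq P μ ξ) (hμ1 : μ {1} ≠ 0) :
    P ({ω | OnePath (fun i => ξ i ω)}
      ∩ {ω | ∀ t : ℕ, ∃ n, (t : ℕ∞) < v (fun i => ξ i ω) n}
      ∩ {ω | ∀ N, ∃ n, N ≤ n ∧ bad (fun i => ξ i ω) n}) = 0 := by
  set E := {ω | OnePath (fun i => ξ i ω)}
      ∩ {ω | ∀ t : ℕ, ∃ n, (t : ℕ∞) < v (fun i => ξ i ω) n}
      ∩ {ω | ∀ N, ∃ n, N ≤ n ∧ bad (fun i => ξ i ω) n} with hE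
  -- inclusion into high-level bad events
  have hsub : ∀ T₀ : ℕ, E ⊆ ⋃ (s : ℕ) (n : ℕ),
      (Fev ξ v (T₀ + 1 + s) n ∩ ξ n ⁻¹' winSet (T₀ + 1 + s) C) := by
    intro T₀ ω hω
    obtain ⟨⟨h1, h2⟩, h3⟩ := hω
    set η : Path := fun i => ξ i ω with hηdef
    obtain ⟨n₁, hn₁⟩ := h2 T₀
    obtain ⟨n, hn, hbadn⟩ := h3 n₁
    have hmono : v η n₁ ≤ v η n := v_mono' v hv_dep hv_mono (fun i _ => h1 i) hn
    have hvfin : v η n ≠ ⊤ := v_fin' v hv_dep hv_fin (fun i _ => h1 i)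
    set t' : ℕ := (v η n).toNat with ht'
    have hvt : v η n = (t' : ℕ∞) := by
      rw [ht']
      exact (ENat.coe_toNat hvfin).symm
    have ht'T : T₀ < t' := by
      have : (T₀ : ℕ∞) < (t' : ℕ∞) := by rw [← hvt]; exact lt_of_lt_of_le hn₁ hmono
      exact_mod_cast this
    obtain ⟨hb1, hb2⟩ := hwin η h1 n hbadn
    simp only [Set.mem_iUnion]
    refine ⟨t' - (T₀ + 1), n, ⟨fun i _ => h1 i, ?_⟩, ?_⟩
    · rw [hvt]
      congr 1
      omega
    · simp only [Set.mem_preimage, winSet, Set.mem_setOf_eq]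
      rw [hvt] at hb1 hb2
      have e1 : T₀ + 1 + (t' - (T₀ + 1)) = t' := by omega
      rw [e1]
      constructor
      · exact_mod_cast hb1
      · exact_mod_cast hb2
  -- probability bound
  have hbound : ∀ T₀ : ℕ, P E ≤ (2 / μ {1}) * (C * μ {x : ℕ | T₀ + 1 ≤ x}) := by
    intro T₀
    refine le_trans (measure_mono (hsub T₀)) ?_
    refine le_trans (measure_iUnion_le _) ?_
    have hterm : ∀ s : ℕ, P (⋃ n : ℕ, (Fev ξ v (T₀ + 1 + s) n ∩ ξ n ⁻¹' winSet (T₀ + 1 + s) C))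
        ≤ (2 / μ {1}) * μ (winSet (T₀ + 1 + s) C) := by
      intro s
      refine le_trans (measure_iUnion_le _) ?_
      have heach : ∀ n : ℕ, P (Fev ξ v (T₀ + 1 + s) n ∩ ξ n ⁻¹' winSet (T₀ + 1 + s) C)
          = P (Fev ξ v (T₀ + 1 + s) n) * μ (winSet (T₀ + 1 + s) C) := by
        intro n
        unfold Fev
        exact next_coord_mul h _ n (Fev_dep v hv_dep (T₀ + 1 + s) n) _
      rw [tsum_congr heach, ENNReal.tsum_mul_right]
      exact mul_le_mul_left
        (sojourn v hv_dep hv_mono hstay h hμ1 (T₀ + 1 + s) (by omega)) _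
    refine le_trans (ENNReal.tsum_le_tsum hterm) ?_
    rw [ENNReal.tsum_mul_left]
    refine mul_le_mul_right ?_ _
    -- ∑' s, μ (winSet (T₀+1+s) C) ≤ C * μ {x | T₀+1 ≤ x}
    have hwin_sub : ∀ s : ℕ, winSet (T₀ + 1 + s) C ⊆
        ⋃ i ∈ Finset.range C, ({T₀ + 2 + s + i} : Set ℕ) := by
      intro s x hx
      obtain ⟨hx1, hx2⟩ := hx
      simp only [Set.mem_iUnion, Finset.mem_range, Set.mem_singleton_iff]
      exact ⟨x - (T₀ + 2 + s), by omega, by omega⟩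
    calc ∑' s : ℕ, μ (winSet (T₀ + 1 + s) C)
        ≤ ∑' s : ℕ, ∑ i ∈ Finset.range C, μ ({T₀ + 2 + s + i} : Set ℕ) := by
          refine ENNReal.tsum_le_tsum (fun s => ?_)
          refine le_trans (measure_mono (hwin_sub s)) ?_
          exact measure_biUnion_finset_le _ _
      _ = ∑ i ∈ Finset.range C, ∑' s : ℕ, μ ({T₀ + 2 + s + i} : Set ℕ) := by
          exact Summable.tsum_finsetSum (fun i _ => ENNReal.summable)
      _ ≤ ∑ i ∈ Finset.range C, μ {x : ℕ | T₀ + 1 ≤ x} := by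
          refine Finset.sum_le_sum (fun i _ => ?_)
          have : ∑' s : ℕ, μ ({T₀ + 2 + s + i} : Set ℕ)
              = ∑' s : ℕ, μ ({(T₀ + 2 + i) + s} : Set ℕ) := by
            refine tsum_congr (fun s => ?_)
            congr 1
            ext x
            simp only [Set.mem_singleton_iff]
            omega
          rw [this, ← measure_setOf_ge (T₀ + 2 + i)]
          exact measure_mono (fun x hx => by simp only [Set.mem_setOf_eq] at *; omega)
      _ = C * μ {x : ℕ | T₀ + 1 ≤ x} := by
          rw [Finset.sum_const, Finset.card_range, nsmul_eq_mul]
  -- conclude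
  have hconst : (2 / μ {1}) * (C : ℝ≥0∞) ≠ ⊤ := by
    apply ENNReal.mul_ne_top
    · exact (ENNReal.div_lt_top (by norm_num) hμ1).ne
    · simp
  have htend : Tendsto (fun T₀ : ℕ => (2 / μ {1}) * (C * μ {x : ℕ | T₀ + 1 ≤ x}))
      atTop (𝓝 0) := by
    have h1 : Tendsto (fun T₀ : ℕ => μ {x : ℕ | T₀ + 1 ≤ x}) atTop (𝓝 0) :=
      (tau_tendsto (μ := μ)).comp (tendsto_add_atTop_nat 1)
    have h2 := ENNReal.Tendsto.const_mul (a := (2 / μ {1}) * (C : ℝ≥0∞)) h1 (Or.inr hconst)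
    simp only [mul_zero] at h2
    convert h2 using 2 with T₀
    ring
  have := ge_of_tendsto' htend (fun T₀ => hbound T₀)
  exact le_antisymm this zero_le

end BC

end S13
end

noncomputable section
namespace S13
set_option linter.unusedSectionVars false

variable {Ω : Type*} [MeasurableSpace Ω] {P : Measure Ω} [IsProbabilityMeasure P]
  {μ : Measure ℕ} [IsProbabilityMeasure μ] {ξ : ℕ → Ω → ℕ}

lemma DepOn.mono {p : Path → Prop} {off n n' : ℕ} (h : DepOn p off n) (hn : n ≤ n') :
    DepOn p off n' := fun η η' hagr hp => h η η' (fun i h1 h2 => hagr i h1 (by omega)) hp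

/-- splitting a prefix event from a countable intersection of future events. -/
lemma tail_block_mul (h : IsIIDSeq P μ ξ) (p : Path → Prop) (N : ℕ) (hp : DepOn p 0 N)
    (q : ℕ → Path → Prop) (hq : ∀ M, DepOn (q M) N (M + 1)) :
    P (evt ξ p ∩ ⋂ M, evt ξ (q M)) = P (evt ξ p) * P (⋂ M, evt ξ (q M)) := by
  -- partial intersections
  set QQ : ℕ → Set Ω := fun M => evt ξ (fun η => ∀ M' ≤ M, q M' η) with hQQ
  have hQQdep : ∀ M, DepOn (fun η => ∀ M' ≤ M, q M' η) N (M + 1) := by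
    intro M η η' hagr hη M' hM'
    exact (hq M').mono (by omega) η η' hagr (hη M' hM')
  have hQQm : ∀ M, MeasurableSet (QQ M) := fun M => evt_meas h _ N (M+1) (hQQdep M)
  have hQQanti : Antitone QQ := by
    intro a b hab ω hω
    intro M' hM'
    exact hω M' (by omega)
  have hiQQ : (⋂ M, QQ M) = ⋂ M, evt ξ (q M) := by
    ext ω
    simp only [Set.mem_iInter, hQQ, evt, Set.mem_setOf_eq]
    constructor
    · intro hω M
      exact hω M M le_rfl
    · intro hω M M' _
      exact hω M'
  have hPm : MeasurableSet (evt ξ p) := evt_meas h p 0 N hp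
  have h1 : Tendsto (fun M => P (evt ξ p ∩ QQ M)) atTop (𝓝 (P (evt ξ p ∩ ⋂ M, QQ M))) := by
    rw [show (evt ξ p ∩ ⋂ M, QQ M) = ⋂ M, (evt ξ p ∩ QQ M) by rw [Set.inter_iInter]]
    refine tendsto_measure_iInter_atTop (fun M => (hPm.inter (hQQm M)).nullMeasurableSet)
      (fun a b hab => Set.inter_subset_inter_right _ (hQQanti hab)) ⟨0, measure_ne_top _ _⟩
  have h2 : Tendsto (fun M => P (QQ M)) atTop (𝓝 (P (⋂ M, QQ M))) :=
    tendsto_measure_iInter_atTop (fun M => (hQQm M).nullMeasurableSet)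
      hQQanti ⟨0, measure_ne_top _ _⟩
  have h3 : ∀ M, P (evt ξ p ∩ QQ M) = P (evt ξ p) * P (QQ M) := by
    intro M
    exact block_mul h p _ N (M+1) hp (hQQdep M)
  have h4 : Tendsto (fun M => P (evt ξ p) * P (QQ M)) atTop
      (𝓝 (P (evt ξ p) * P (⋂ M, QQ M))) := by
    refine ENNReal.Tendsto.const_mul h2 (Or.inr (measure_ne_top _ _))
  rw [← hiQQ]
  have := tendsto_nhds_unique (by rw [show (fun M => P (evt ξ p ∩ QQ M))
      = fun M => P (evt ξ p) * P (QQ M) from funext h3] at h1; exact h1) h4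
  exact this

end S13
end

noncomputable section
namespace S13
set_option linter.unusedSectionVars false

lemma barrier_suppLE : SuppLE barrier 0 := by
  intro i hi
  unfold barrier
  rw [if_neg (by omega)]

lemma nice_barrier : Nice barrier 0 := by
  refine ⟨⟨0, barrier_suppLE⟩, ?_⟩
  rw [tailSum_eq_sum barrier_suppLE 0]
  simp [barrier]

lemma tailSum_barrier_pos {j : ℤ} (hj : 1 ≤ j) : tailSum barrier j = 0 :=
  tailSum_zero_of_gt barrier_suppLE (by omega)

lemma Tbarrier_one {η : Path} (hη : OnePath η) (n : ℕ) : T barrier η n 1 = n := by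
  induction n with
  | zero =>
    show tailSum barrier 1 = 0
    exact tailSum_barrier_pos le_rfl
  | succ n ih =>
    rw [Trec nice_barrier hη n 1, ih, if_pos]
    · push_cast; ring
    · rw [show (1:ℤ) - 1 = 0 from rfl, ibm_top nice_barrier hη n]
      exact le_top

/-- a monotone sequence in ℕ∞ bounded by a natural is eventually constant -/
lemma evconst {f : ℕ → ℕ∞} (hmono : ∀ a b, a ≤ b → f a ≤ f b) {t₀ : ℕ}
    (hb : ∀ n, f n ≤ (t₀ : ℕ∞)) : ∃ n₀, ∀ n, n₀ ≤ n → f n = f n₀ := by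
  set g : ℕ → ℕ := fun n => (f n).toNat with hg
  have hfg : ∀ n, f n = (g n : ℕ∞) := by
    intro n
    rw [hg]
    exact (ENat.coe_toNat (ne_top_of_le_ne_top (by simp) (hb n))).symm
  have hgmono : ∀ a b, a ≤ b → g a ≤ g b := by
    intro a b hab
    have := hmono a b hab
    rw [hfg a, hfg b] at this
    exact_mod_cast this
  have hgb : ∀ n, g n ≤ t₀ := by
    intro n
    have := hb n
    rw [hfg n] at this
    exact_mod_cast this
  set V := (Finset.range (t₀ + 1)).filter (fun v => ∃ n, g n = v) with hV
  have hVne : V.Nonempty := ⟨g 0, by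
    simp only [hV, Finset.mem_filter, Finset.mem_range]
    exact ⟨by have := hgb 0; omega, 0, rfl⟩⟩
  obtain ⟨n₀, hn₀⟩ : ∃ n₀, g n₀ = V.max' hVne := by
    have := V.max'_mem hVne
    simp only [hV, Finset.mem_filter] at this
    obtain ⟨-, n, hn⟩ := this
    exact ⟨n, hn⟩
  refine ⟨n₀, fun n hn => ?_⟩
  rw [hfg n, hfg n₀]
  congr 1
  refine le_antisymm ?_ (hgmono n₀ n hn)
  rw [hn₀]
  refine Finset.le_max' V (g n) ?_
  simp only [hV, Finset.mem_filter, Finset.mem_range]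
  exact ⟨by have := hgb n; omega, n, rfl⟩

/-- if `T` stays put then the increment condition failed -/
lemma T_stay {Z : Config} {δ₀ : ℤ} (hZ : Nice Z δ₀) {η : Path} (hη : OnePath η)
    {n : ℕ} {j : ℤ} (hfin : T Z η n j ≠ ⊤) (he : T Z η (n+1) j = T Z η n j) :
    ¬ ((η n : ℕ∞) ≤ T Z η n (j - 1)) := by
  intro hc
  rw [Trec hZ hη n j, if_pos hc] at he
  set a := T Z η n j
  have : a + 1 ≠ a := by
    intro hh
    have h1 : a.toNat + 1 = a.toNat := by
      have : ((a.toNat : ℕ∞) + 1) = (a.toNat : ℕ∞) := by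
        rw [ENat.coe_toNat hfin]; exact hh
      exact_mod_cast this
    omega
  exact this he

lemma HitAt_restart (Z : Config) (η : Path) (k : ℤ) (N M : ℕ) :
    HitAt Z η k (N + M) ↔ HitAt (ibm Z η N) (fun i => η (N + i)) k M := by
  unfold HitAt T
  rw [ibm_restart Z η N M]

end S13
end

noncomputable section
namespace S13
set_option linter.unusedSectionVars false

variable {Ω : Type*} [MeasurableSpace Ω] {P : Measure Ω} [IsProbabilityMeasure P]
  {μ : Measure ℕ} [IsProbabilityMeasure μ] {ξ : ℕ → Ω → ℕ}

/-- all coordinates ≥ 1 -/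
abbrev Ω1 (ξ : ℕ → Ω → ℕ) : Set Ω := {ω | OnePath (fun i => ξ i ω)}

abbrev Vinf (ξ : ℕ → Ω → ℕ) (v : Path → ℕ → ℕ∞) : Set Ω :=
  {ω | ∀ t : ℕ, ∃ n, (t : ℕ∞) < v (fun i => ξ i ω) n}

abbrev InfBad (ξ : ℕ → Ω → ℕ) (bad : Path → ℕ → Prop) : Set Ω :=
  {ω | ∀ N, ∃ n, N ≤ n ∧ bad (fun i => ξ i ω) n}

lemma Ω1_compl_null (h : IsIIDSeq P μ ξ) (hμ0 : μ {0} = 0) : P ((Ω1 ξ)ᶜ) = 0 := by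
  refine measure_mono_null ?_ (null_exists_zero h hμ0)
  intro ω hω
  simp only [Set.mem_compl_iff, Ω1, Set.mem_setOf_eq, OnePath] at hω
  push_neg at hω
  obtain ⟨i, hi⟩ := hω
  exact ⟨i, by omega⟩

lemma Tinf_null (h : IsIIDSeq P μ ξ) (hμ1 : μ {1} ≠ 0) (m : ℕ) (hm : 1 ≤ m) :
    P (Ω1 ξ ∩ (Vinf ξ (fun η n => T barrier η n (m : ℤ)))ᶜ) = 0 := by
  induction m with
  | zero => omega
  | succ m ih =>
    rcases Nat.eq_zero_or_pos m with rfl | hm'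
    · -- base case : m + 1 = 1
      have : Ω1 ξ ∩ (Vinf ξ (fun η n => T barrier η n ((1:ℕ) : ℤ)))ᶜ = ∅ := by
        ext ω
        simp only [Set.mem_inter_iff, Set.mem_compl_iff, Set.mem_setOf_eq,
          Set.mem_empty_iff_false, iff_false, not_and]
        intro h1 h2
        apply h2
        intro t
        refine ⟨t + 1, ?_⟩
        rw [show ((1:ℕ):ℤ) = (1:ℤ) by norm_num, Tbarrier_one h1 (t+1)]
        exact_mod_cast Nat.lt_succ_self t
      rw [this, measure_empty]
    · -- inductive step
      have hsub : Ω1 ξ ∩ (Vinf ξ (fun η n => T barrier η n ((m+1 : ℕ) : ℤ)))ᶜ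
          ⊆ (Ω1 ξ ∩ (Vinf ξ (fun η n => T barrier η n (m : ℤ)))ᶜ)
            ∪ {ω | ∃ n₀, ∀ n, n₀ ≤ n → ξ n ω ≠ 1} := by
        intro ω hω
        obtain ⟨h1, h2⟩ := hω
        by_cases hVm : ω ∈ Vinf ξ (fun η n => T barrier η n (m : ℤ))
        · right
          set η : Path := fun i => ξ i ω with hηdef
          simp only [Set.mem_compl_iff, Set.mem_setOf_eq] at h2
          push_neg at h2
          obtain ⟨t₀, ht₀⟩ := h2
          have hb : ∀ n, T barrier η n ((m+1:ℕ):ℤ) ≤ (t₀ : ℕ∞) := fun n => ht₀ n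
          obtain ⟨n₀, hn₀⟩ := evconst
            (fun a b hab => T_mono nice_barrier h1 hab ((m+1:ℕ):ℤ)) hb
          obtain ⟨n₂, hn₂⟩ := hVm 1
          simp only [Set.mem_setOf_eq]
          refine ⟨max n₀ n₂, fun n hn => ?_⟩
          have hstayn : T barrier η (n+1) ((m+1:ℕ):ℤ) = T barrier η n ((m+1:ℕ):ℤ) := by
            rw [hn₀ (n+1) (by omega), hn₀ n (by omega)]
          have hfin : T barrier η n ((m+1:ℕ):ℤ) ≠ ⊤ :=
            ne_top_of_le_ne_top (by simp) (hb n)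
          have hnot := T_stay nice_barrier h1 hfin hstayn
          have hTm : (1 : ℕ∞) < T barrier η n (m : ℤ) :=
            lt_of_lt_of_le hn₂ (T_mono nice_barrier h1 (by omega) (m:ℤ))
          rw [show ((m+1:ℕ):ℤ) - 1 = (m:ℤ) by push_cast; ring] at hnot
          intro hc
          apply hnot
          rw [hc]
          exact le_of_lt (by exact_mod_cast hTm)
        · left
          exact ⟨h1, hVm⟩
      refine measure_mono_null hsub ?_
      refine measure_union_null (ih hm') (null_no_ones h hμ1)

end S13
end

noncomputable section
namespace S13
set_option linter.unusedSectionVars false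

variable {Ω : Type*} [MeasurableSpace Ω] {P : Measure Ω} [IsProbabilityMeasure P]
  {μ : Measure ℕ} [IsProbabilityMeasure μ] {ξ : ℕ → Ω → ℕ}

lemma tailSum_le_split {X : Config} {M : ℤ} (hM : SuppLE X M) (j : ℤ) :
    tailSum X j ≤ X j + tailSum X (j + 1) := by
  rcases le_or_gt j M with hj | hj
  · exact le_of_eq (tailSum_split hM hj)
  · rw [tailSum_zero_of_gt hM hj]
    exact zero_le

lemma cnt_bdd_of_no_late_hits {Z : Config} {η : Path} {k : ℤ} {N : ℕ}
    (hno : ∀ n, N ≤ n → ¬ HitAt Z η k n) (n : ℕ) :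
    ((Finset.range n).filter (HitAt Z η k)).card
      ≤ ((Finset.range N).filter (HitAt Z η k)).card := by
  apply Finset.card_le_card
  intro m hm
  simp only [Finset.mem_filter, Finset.mem_range] at hm ⊢
  refine ⟨?_, hm.2⟩
  by_contra hc
  exact hno m (by omega) hm.2

/-- the bins of the barrier process, from a bounded bin onwards, stay bounded a.s. -/
lemma binBdd_null (h : IsIIDSeq P μ ξ) (hμ1 : μ {1} ≠ 0) (d' : ℕ) (hd : 1 ≤ d')
    (base : P (Ω1 ξ ∩ {ω | ¬ ∃ C : ℕ, ∀ n,
        ibm barrier (fun i => ξ i ω) n (d' : ℤ) ≤ (C:ℕ∞)}) = 0) :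
    ∀ m : ℕ, d' ≤ m → P (Ω1 ξ ∩ {ω | ¬ ∃ C : ℕ, ∀ n,
        ibm barrier (fun i => ξ i ω) n (m : ℤ) ≤ (C:ℕ∞)}) = 0 := by
  intro m hm
  induction m with
  | zero => omega
  | succ m ih =>
    rcases Nat.lt_or_ge d' (m+1) with hlt | hge
    swap
    · have : d' = m + 1 := by omega
      subst this
      exact base
    have hmd : d' ≤ m := by omega
    have hprev := ih hmd
    have hm1 : 1 ≤ m := by omega
    have hcast1 : ((m+1:ℕ):ℤ) - 1 = (m:ℤ) := by push_cast; ring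
    have hcast2 : (m:ℤ) + 1 = ((m+1:ℕ):ℤ) := by push_cast; ring
    set v : Path → ℕ → ℕ∞ := fun η n => T barrier η n ((m+1:ℕ):ℤ) with hv
    set bad : ℕ → Path → ℕ → Prop := fun C η n =>
      HitAt barrier η ((m+1:ℕ):ℤ) n ∧ ∀ i, i ≤ n →
        ibm barrier η i (m:ℤ) ≤ (C:ℕ∞) with hbad
    have hv_dep : ∀ (η η' : Path) (n : ℕ), (∀ i, i < n → η i = η' i) → v η n = v η' n :=
      fun η η' n hagr => T_congr hagr _
    have hv_mono : ∀ (η : Path), OnePath η → ∀ n, v η n ≤ v η (n+1) :=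
      fun η hη n => T_mono nice_barrier hη (by omega) _
    have hv_fin : ∀ (η : Path), OnePath η → ∀ n, v η n ≠ ⊤ := by
      intro η hη n
      refine T_fin nice_barrier hη ?_ n
      rw [tailSum_barrier_pos (by push_cast; omega)]
      simp
    have hstay : ∀ (η : Path), OnePath η → ∀ n, v η (n+1) = v η n → v η n < (η n : ℕ∞) := by
      intro η hη n he
      have hnot := T_stay nice_barrier hη (hv_fin η hη n) he
      rw [hcast1] at hnot
      exact lt_of_le_of_lt (T_antitone (by push_cast; omega)) (lt_of_not_ge hnot)
    have hbad_dep : ∀ C, ∀ (η η' : Path) (n : ℕ), (∀ i, i ≤ n → η i = η' i) →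
        bad C η n → bad C η' n := by
      rintro C η η' n hagr ⟨hb1, hb2⟩
      refine ⟨(HitAt_congr hagr).mp hb1, fun i hi => ?_⟩
      have he : ibm barrier η i = ibm barrier η' i :=
        ibm_congr (fun i' hi' => hagr i' (by omega))
      rw [← he]
      exact hb2 i hi
    have hwin : ∀ C, ∀ (η : Path), OnePath η → ∀ n, bad C η n →
        v η n < (η n : ℕ∞) ∧ (η n : ℕ∞) ≤ v η n + C := by
      rintro C η hη n ⟨⟨hh1, hh2⟩, hq⟩
      refine ⟨lt_of_not_ge hh2, ?_⟩
      rw [hcast1] at hh1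
      obtain ⟨M, hM⟩ := ibm_suppLE nice_barrier η n
      have hsplit : T barrier η n (m:ℤ)
          ≤ ibm barrier η n (m:ℤ) + T barrier η n ((m:ℤ)+1) := tailSum_le_split hM (m:ℤ)
      rw [hcast2] at hsplit
      calc (η n : ℕ∞) ≤ T barrier η n (m:ℤ) := hh1
        _ ≤ ibm barrier η n (m:ℤ) + v η n := hsplit
        _ ≤ (C:ℕ∞) + v η n := add_le_add (hq n le_rfl) le_rfl
        _ = v η n + C := add_comm _ _
    have hbc : ∀ C : ℕ, P (Ω1 ξ ∩ Vinf ξ v ∩ InfBad ξ (bad C)) = 0 := fun C =>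
      bcstar v (bad C) C hv_dep hv_mono hv_fin hstay (hbad_dep C) (hwin C) h hμ1
    have hsub : Ω1 ξ ∩ {ω | ¬ ∃ C : ℕ, ∀ n,
          ibm barrier (fun i => ξ i ω) n ((m+1:ℕ) : ℤ) ≤ (C:ℕ∞)}
        ⊆ ((Ω1 ξ ∩ {ω | ¬ ∃ C : ℕ, ∀ n, ibm barrier (fun i => ξ i ω) n (m : ℤ) ≤ (C:ℕ∞)})
            ∪ (Ω1 ξ ∩ (Vinf ξ v)ᶜ))
          ∪ ⋃ C : ℕ, (Ω1 ξ ∩ Vinf ξ v ∩ InfBad ξ (bad C)) := by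
      rintro ω ⟨h1, h2⟩
      by_cases hprevC : ∃ C : ℕ, ∀ n, ibm barrier (fun i => ξ i ω) n (m:ℤ) ≤ (C:ℕ∞)
      swap
      · exact Or.inl (Or.inl ⟨h1, hprevC⟩)
      by_cases hVv : ω ∈ Vinf ξ v
      swap
      · exact Or.inl (Or.inr ⟨h1, hVv⟩)
      right
      obtain ⟨C, hC⟩ := hprevC
      refine Set.mem_iUnion.mpr ⟨C, ⟨h1, hVv⟩, ?_⟩
      intro N
      by_contra hc
      push_neg at hc
      apply h2
      have hnohit : ∀ n, N ≤ n → ¬ HitAt barrier (fun i => ξ i ω) ((m+1:ℕ):ℤ) n := by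
        intro n hn hhit
        exact (hc n hn) ⟨hhit, fun i _ => hC i⟩
      refine ⟨((Finset.range N).filter
        (HitAt barrier (fun i => ξ i ω) ((m+1:ℕ):ℤ))).card, fun n => ?_⟩
      rw [ibm_bin_eq_cnt]
      rw [show barrier ((m+1:ℕ):ℤ) = 0 from by unfold barrier; rw [if_neg (by push_cast; omega)],
        zero_add]
      exact_mod_cast cnt_bdd_of_no_late_hits hnohit n
    refine measure_mono_null hsub ?_
    refine measure_union_null (measure_union_null hprev ?_) ?_
    · exact Tinf_null h hμ1 (m+1) (by omega)
    · refine le_antisymm (le_trans (measure_iUnion_le _) ?_) zero_le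
      simp only [hbc, tsum_zero, le_refl]

end S13
end

noncomputable section
namespace S13
set_option linter.unusedSectionVars false

variable {Ω : Type*} [MeasurableSpace Ω] {P : Measure Ω} [IsProbabilityMeasure P]
  {μ : Measure ℕ} [IsProbabilityMeasure μ] {ξ : ℕ → Ω → ℕ}

lemma filter_card_bdd {p : ℕ → Prop} {N : ℕ} (hno : ∀ n, N ≤ n → ¬ p n) (n : ℕ) :
    ((Finset.range n).filter p).card ≤ ((Finset.range N).filter p).card := by
  apply Finset.card_le_card
  intro m hm
  simp only [Finset.mem_filter, Finset.mem_range] at hm ⊢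
  refine ⟨?_, hm.2⟩
  by_contra hc
  exact hno m (by omega) hm.2

/-- discrepancy bookkeeping between the process from `Z₀` and the barrier process -/
lemma bookkeep {Z₀ : Config} {δ : ℤ} (hZ₀ : Nice Z₀ δ) {η : Path} (hη : OnePath η)
    (i : ℤ) (c₀ : ℕ) (hc₀ : tailSum Z₀ (δ + i) ≤ (c₀:ℕ∞)) (n : ℕ) :
    T Z₀ η n (δ + i) ≤ T barrier η n i + c₀
      + ((Finset.range n).filter (fun m => ¬((η m:ℕ∞) ≤ T barrier η m (i-1))
          ∧ (η m:ℕ∞) ≤ T Z₀ η m (δ+i-1))).card := by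
  induction n with
  | zero =>
    simp only [Finset.range_zero, Finset.filter_empty, Finset.card_empty, Nat.cast_zero,
      add_zero]
    exact le_trans hc₀ le_add_self
  | succ n ih =>
    rw [Trec hZ₀ hη n (δ+i), Trec nice_barrier hη n i]
    rw [Finset.range_add_one, Finset.filter_insert]
    by_cases hw : ¬((η n:ℕ∞) ≤ T barrier η n (i-1)) ∧ (η n:ℕ∞) ≤ T Z₀ η n (δ+i-1)
    · rw [if_pos hw, Finset.card_insert_of_notMem (by simp)]
      have hiO : (if (η n:ℕ∞) ≤ T Z₀ η n (δ+i-1) then (1:ℕ∞) else 0) ≤ 1 := by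
        split <;> simp
      calc T Z₀ η n (δ+i) + (if (η n:ℕ∞) ≤ T Z₀ η n (δ+i-1) then (1:ℕ∞) else 0)
          ≤ (T barrier η n i + c₀ + ((Finset.range n).filter (fun m =>
              ¬((η m:ℕ∞) ≤ T barrier η m (i-1)) ∧ (η m:ℕ∞) ≤ T Z₀ η m (δ+i-1))).card) + 1 :=
            add_le_add ih hiO
        _ = T barrier η n i + c₀ + ((((Finset.range n).filter (fun m =>
              ¬((η m:ℕ∞) ≤ T barrier η m (i-1)) ∧ (η m:ℕ∞) ≤ T Z₀ η m (δ+i-1))).card + 1 : ℕ)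
              : ℕ∞) := by push_cast; ring
        _ ≤ (T barrier η n i + (if (η n:ℕ∞) ≤ T barrier η n (i-1) then (1:ℕ∞) else 0)) + c₀
            + ((((Finset.range n).filter (fun m =>
              ¬((η m:ℕ∞) ≤ T barrier η m (i-1)) ∧ (η m:ℕ∞) ≤ T Z₀ η m (δ+i-1))).card + 1 : ℕ)
              : ℕ∞) := by
            refine add_le_add (add_le_add ?_ le_rfl) le_rfl
            exact le_self_add
    · rw [if_neg hw]
      have hind : (if (η n:ℕ∞) ≤ T Z₀ η n (δ+i-1) then (1:ℕ∞) else 0)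
          ≤ (if (η n:ℕ∞) ≤ T barrier η n (i-1) then (1:ℕ∞) else 0) := by
        by_cases ho : (η n:ℕ∞) ≤ T Z₀ η n (δ+i-1)
        · have hb : (η n:ℕ∞) ≤ T barrier η n (i-1) := by
            by_contra hb
            exact hw ⟨hb, ho⟩
          rw [if_pos ho, if_pos hb]
        · rw [if_neg ho]
          exact zero_le
      calc T Z₀ η n (δ+i) + (if (η n:ℕ∞) ≤ T Z₀ η n (δ+i-1) then (1:ℕ∞) else 0)
          ≤ (T barrier η n i + c₀ + ((Finset.range n).filter (fun m =>
              ¬((η m:ℕ∞) ≤ T barrier η m (i-1)) ∧ (η m:ℕ∞) ≤ T Z₀ η m (δ+i-1))).card)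
            + (if (η n:ℕ∞) ≤ T barrier η n (i-1) then (1:ℕ∞) else 0) :=
            add_le_add ih hind
        _ = (T barrier η n i + (if (η n:ℕ∞) ≤ T barrier η n (i-1) then (1:ℕ∞) else 0)) + c₀
            + ((Finset.range n).filter (fun m =>
              ¬((η m:ℕ∞) ≤ T barrier η m (i-1)) ∧ (η m:ℕ∞) ≤ T Z₀ η m (δ+i-1))).card := by
            ring

/-- base: the tail at `δ+1` moves in lockstep with the barrier tail at 1 -/
lemma TO_base {Z₀ : Config} {δ : ℤ} (hZ₀ : Nice Z₀ δ) {η : Path} (hη : OnePath η) (n : ℕ) :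
    T Z₀ η n (δ + 1) = tailSum Z₀ (δ + 1) + n := by
  induction n with
  | zero => simp [T, ibm]
  | succ n ih =>
    rw [Trec hZ₀ hη n (δ+1), ih, if_pos]
    · push_cast; ring
    · rw [show δ + 1 - 1 = δ by ring, ibm_top hZ₀ hη n]
      exact le_top

/-- the discrepancy between our process and the barrier process stays bounded a.s. -/
lemma disc_null (h : IsIIDSeq P μ ξ) (hμ1 : μ {1} ≠ 0) {Z₀ : Config} {δ : ℤ}
    (hZ₀ : Nice Z₀ δ) (hfin : ∀ j : ℤ, δ < j → tailSum Z₀ j ≠ ⊤) :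
    ∀ i : ℕ, 1 ≤ i → P (Ω1 ξ ∩ {ω | ¬ ∃ c : ℕ, ∀ n,
      T Z₀ (fun i' => ξ i' ω) n (δ + (i:ℤ))
        ≤ T barrier (fun i' => ξ i' ω) n (i:ℤ) + c}) = 0 := by
  intro i hi
  induction i with
  | zero => omega
  | succ i ih =>
    rcases Nat.eq_zero_or_pos i with rfl | hi1
    · -- base case i+1 = 1
      refine measure_mono_null (fun ω hω => ?_) (measure_empty (μ := P))
      obtain ⟨h1, h2⟩ := hω
      exfalso
      apply h2
      have hfin1 : tailSum Z₀ (δ+1) ≠ ⊤ := hfin _ (by omega)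
      refine ⟨(tailSum Z₀ (δ + 1)).toNat, fun n => ?_⟩
      rw [show ((0+1:ℕ):ℤ) = 1 by norm_num]
      rw [TO_base hZ₀ h1 n, Tbarrier_one h1 n, ← ENat.coe_toNat hfin1]
      exact le_of_eq (add_comm _ _)
    · -- inductive step
      have hprev := ih hi1
      have hcast1 : δ + ((i+1:ℕ):ℤ) - 1 = δ + (i:ℤ) := by push_cast; ring
      have hcast2 : ((i+1:ℕ):ℤ) - 1 = (i:ℤ) := by push_cast; ring
      set v : Path → ℕ → ℕ∞ := fun η n => T barrier η n (i:ℤ) with hv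
      set bad : ℕ → Path → ℕ → Prop := fun c η n =>
        (¬((η n:ℕ∞) ≤ T barrier η n (i:ℤ))) ∧ ((η n:ℕ∞) ≤ T Z₀ η n (δ+(i:ℤ)))
          ∧ (∀ j, j ≤ n → T Z₀ η j (δ+(i:ℤ)) ≤ T barrier η j (i:ℤ) + c) with hbad
      have hv_dep : ∀ (η η' : Path) (n : ℕ), (∀ i', i' < n → η i' = η' i') → v η n = v η' n :=
        fun η η' n hagr => T_congr hagr _
      have hv_mono : ∀ (η : Path), OnePath η → ∀ n, v η n ≤ v η (n+1) :=
        fun η hη n => T_mono nice_barrier hη (by omega) _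
      have hv_fin : ∀ (η : Path), OnePath η → ∀ n, v η n ≠ ⊤ := by
        intro η hη n
        refine T_fin nice_barrier hη ?_ n
        rw [tailSum_barrier_pos (by exact_mod_cast hi1)]
        simp
      have hstay : ∀ (η : Path), OnePath η → ∀ n, v η (n+1) = v η n → v η n < (η n : ℕ∞) := by
        intro η hη n he
        have hnot := T_stay nice_barrier hη (hv_fin η hη n) he
        exact lt_of_le_of_lt (T_antitone (by omega)) (lt_of_not_ge hnot)
      have hbad_dep : ∀ c, ∀ (η η' : Path) (n : ℕ), (∀ i', i' ≤ n → η i' = η' i') →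
          bad c η n → bad c η' n := by
        rintro c η η' n hagr ⟨hb1, hb2, hb3⟩
        have e0 := hagr n le_rfl
        refine ⟨?_, ?_, ?_⟩
        · rwa [← e0, ← T_congr (fun i' hi' => hagr i' (by omega)) (i:ℤ)]
        · rwa [← e0, ← T_congr (fun i' hi' => hagr i' (by omega)) (δ+(i:ℤ))]
        · intro j hj
          rw [← T_congr (fun i' hi' => hagr i' (by omega)) (δ+(i:ℤ)),
            ← T_congr (fun i' hi' => hagr i' (by omega)) (i:ℤ)]
          exact hb3 j hj
      have hwin : ∀ c, ∀ (η : Path), OnePath η → ∀ n, bad c η n →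
          v η n < (η n : ℕ∞) ∧ (η n : ℕ∞) ≤ v η n + c := by
        rintro c η hη n ⟨hb1, hb2, hb3⟩
        exact ⟨lt_of_not_ge hb1, le_trans hb2 (hb3 n le_rfl)⟩
      have hbc : ∀ c : ℕ, P (Ω1 ξ ∩ Vinf ξ v ∩ InfBad ξ (bad c)) = 0 := fun c =>
        bcstar v (bad c) c hv_dep hv_mono hv_fin hstay (hbad_dep c) (hwin c) h hμ1
      have hsub : Ω1 ξ ∩ {ω | ¬ ∃ c : ℕ, ∀ n,
            T Z₀ (fun i' => ξ i' ω) n (δ + ((i+1:ℕ):ℤ))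
              ≤ T barrier (fun i' => ξ i' ω) n ((i+1:ℕ):ℤ) + c}
          ⊆ ((Ω1 ξ ∩ {ω | ¬ ∃ c : ℕ, ∀ n, T Z₀ (fun i' => ξ i' ω) n (δ + (i:ℤ))
                ≤ T barrier (fun i' => ξ i' ω) n (i:ℤ) + c})
              ∪ (Ω1 ξ ∩ (Vinf ξ v)ᶜ))
            ∪ ⋃ c : ℕ, (Ω1 ξ ∩ Vinf ξ v ∩ InfBad ξ (bad c)) := by
        rintro ω ⟨h1, h2⟩
        by_cases hprevC : ∃ c : ℕ, ∀ n, T Z₀ (fun i' => ξ i' ω) n (δ + (i:ℤ))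
            ≤ T barrier (fun i' => ξ i' ω) n (i:ℤ) + c
        swap
        · exact Or.inl (Or.inl ⟨h1, hprevC⟩)
        by_cases hVv : ω ∈ Vinf ξ v
        swap
        · exact Or.inl (Or.inr ⟨h1, hVv⟩)
        right
        obtain ⟨c, hc⟩ := hprevC
        refine Set.mem_iUnion.mpr ⟨c, ⟨h1, hVv⟩, ?_⟩
        intro N
        by_contra hcnb
        push_neg at hcnb
        apply h2
        -- no wind beyond N
        have hnowind : ∀ n, N ≤ n → ¬(¬((ξ n ω:ℕ∞) ≤ T barrier (fun i' => ξ i' ω) n (i:ℤ))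
            ∧ ((ξ n ω:ℕ∞) ≤ T Z₀ (fun i' => ξ i' ω) n (δ+(i:ℤ)))) := by
          intro n hn hwind
          exact (hcnb n hn) ⟨hwind.1, hwind.2, fun j _ => hc j⟩
        set c₀ : ℕ := (tailSum Z₀ (δ + ((i+1:ℕ):ℤ))).toNat with hc₀
        have hfinb : tailSum Z₀ (δ + ((i+1:ℕ):ℤ)) ≠ ⊤ := hfin _ (by push_cast; omega)
        have bk := bookkeep hZ₀ h1 ((i+1:ℕ):ℤ) c₀
          (le_of_eq (ENat.coe_toNat hfinb).symm)
        rw [hcast1, hcast2] at bk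
        set K := ((Finset.range N).filter (fun m =>
          ¬((ξ m ω:ℕ∞) ≤ T barrier (fun i' => ξ i' ω) m (i:ℤ))
            ∧ (ξ m ω:ℕ∞) ≤ T Z₀ (fun i' => ξ i' ω) m (δ+(i:ℤ)))).card with hK
        refine ⟨c₀ + K, fun n => ?_⟩
        refine le_trans (bk n) ?_
        have e : ((c₀ + K : ℕ) : ℕ∞) = (c₀ : ℕ∞) + (K : ℕ∞) := by push_cast; ring
        rw [e, ← add_assoc]
        refine add_le_add le_rfl ?_
        refine Nat.cast_le.mpr ?_
        rw [hK]
        apply Finset.card_le_card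
        intro m hm
        simp only [Finset.mem_filter, Finset.mem_range] at hm ⊢
        refine ⟨?_, hm.2⟩
        by_contra hcc
        exact hnowind m (by omega) hm.2
      refine measure_mono_null hsub ?_
      refine measure_union_null (measure_union_null hprev ?_) ?_
      · exact Tinf_null h hμ1 i hi1
      · refine le_antisymm (le_trans (measure_iUnion_le _) ?_) zero_le
        simp only [hbc, tsum_zero, le_refl]

end S13
end

noncomputable section
namespace S13
set_option linter.unusedSectionVars false

variable {Ω : Type*} [MeasurableSpace Ω] {P : Measure Ω} [IsProbabilityMeasure P]
  {μ : Measure ℕ} [IsProbabilityMeasure μ] {ξ : ℕ → Ω → ℕ}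

lemma tailSum_split_eq {X : Config} {M : ℤ} (hM : SuppLE X M) (j : ℤ) :
    tailSum X j = X j + tailSum X (j + 1) := by
  rcases le_or_gt j M with hj | hj
  · exact tailSum_split hM hj
  · rw [tailSum_zero_of_gt hM hj, hM j hj, tailSum_zero_of_gt hM (by omega), add_zero]

/-- bin `k` of the process from `Z₀` is hit finitely often, a.s. -/
lemma final_null (h : IsIIDSeq P μ ξ) (hμ1 : μ {1} ≠ 0) {Z₀ : Config} {δ k : ℤ}
    (hZ₀ : Nice Z₀ δ) (hfin : ∀ j : ℤ, δ < j → tailSum Z₀ j ≠ ⊤)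
    (d' : ℕ) (hd : 1 ≤ d')
    (hbase : P (Ω1 ξ ∩ {ω | ¬ ∃ C : ℕ, ∀ n,
        ibm barrier (fun i => ξ i ω) n (d' : ℤ) ≤ (C:ℕ∞)}) = 0)
    (hκ : δ + (d':ℤ) < k) :
    P (Ω1 ξ ∩ InfBad ξ (fun η n => HitAt Z₀ η k n)) = 0 := by
  obtain ⟨κ₁, hκ₁⟩ : ∃ κ₁ : ℕ, (κ₁ : ℤ) = k - 1 - δ :=
    ⟨(k - 1 - δ).toNat, Int.toNat_of_nonneg (by omega)⟩
  have hκ₁d : d' ≤ κ₁ := by omega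
  have hκ₁1 : 1 ≤ κ₁ := by omega
  have A1 := binBdd_null h hμ1 d' hd hbase κ₁ hκ₁d
  have A2 := disc_null h hμ1 hZ₀ hfin κ₁ hκ₁1
  have A3 := Tinf_null h hμ1 (κ₁ + 1) (by omega)
  have hcast0 : ((κ₁ + 1 : ℕ) : ℤ) = k - δ := by push_cast; omega
  have hcastk : δ + ((κ₁ + 1 : ℕ) : ℤ) = k := by omega
  have hcast1 : δ + (κ₁ : ℤ) = k - 1 := by omega
  have hcast2 : (κ₁ : ℤ) + 1 = ((κ₁ + 1 : ℕ) : ℤ) := by push_cast; ring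
  -- domination
  have hdom : ∀ (η : Path), OnePath η → ∀ n, ∀ i : ℤ, 1 ≤ i →
      T barrier η n i ≤ T Z₀ η n (δ + i) := by
    intro η hη n i hi
    refine T_dom nice_barrier hZ₀ hη (fun i' hi' => ?_) n i hi
    rw [tailSum_barrier_pos hi']
    exact zero_le
  set v : Path → ℕ → ℕ∞ := fun η n => T Z₀ η n k with hv
  set bad : ℕ → Path → ℕ → Prop := fun C η n =>
    HitAt Z₀ η k n ∧ ∀ i, i ≤ n → ibm Z₀ η i (k-1) ≤ (C:ℕ∞) with hbad
  have hv_dep : ∀ (η η' : Path) (n : ℕ), (∀ i', i' < n → η i' = η' i') → v η n = v η' n :=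
    fun η η' n hagr => T_congr hagr _
  have hv_mono : ∀ (η : Path), OnePath η → ∀ n, v η n ≤ v η (n+1) :=
    fun η hη n => T_mono hZ₀ hη (by omega) _
  have hv_fin : ∀ (η : Path), OnePath η → ∀ n, v η n ≠ ⊤ :=
    fun η hη n => T_fin hZ₀ hη (hfin k (by omega)) n
  have hstay : ∀ (η : Path), OnePath η → ∀ n, v η (n+1) = v η n → v η n < (η n : ℕ∞) := by
    intro η hη n he
    have hnot := T_stay hZ₀ hη (hv_fin η hη n) he
    exact lt_of_le_of_lt (T_antitone (by omega)) (lt_of_not_ge hnot)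
  have hbad_dep : ∀ C, ∀ (η η' : Path) (n : ℕ), (∀ i', i' ≤ n → η i' = η' i') →
      bad C η n → bad C η' n := by
    rintro C η η' n hagr ⟨hb1, hb2⟩
    refine ⟨(HitAt_congr hagr).mp hb1, fun i hi => ?_⟩
    have he : ibm Z₀ η i = ibm Z₀ η' i := ibm_congr (fun i' hi' => hagr i' (by omega))
    rw [← he]
    exact hb2 i hi
  have hwin : ∀ C, ∀ (η : Path), OnePath η → ∀ n, bad C η n →
      v η n < (η n : ℕ∞) ∧ (η n : ℕ∞) ≤ v η n + C := by
    rintro C η hη n ⟨⟨hh1, hh2⟩, hq⟩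
    refine ⟨lt_of_not_ge hh2, ?_⟩
    obtain ⟨M, hM⟩ := ibm_suppLE hZ₀ η n
    have hsplit : T Z₀ η n (k-1) ≤ ibm Z₀ η n (k-1) + T Z₀ η n k := by
      have := tailSum_split_eq hM (k-1)
      rw [show k - 1 + 1 = k by ring] at this
      exact le_of_eq this
    calc (η n : ℕ∞) ≤ T Z₀ η n (k-1) := hh1
      _ ≤ ibm Z₀ η n (k-1) + v η n := hsplit
      _ ≤ (C:ℕ∞) + v η n := add_le_add (hq n le_rfl) le_rfl
      _ = v η n + C := add_comm _ _
  have hbc : ∀ C : ℕ, P (Ω1 ξ ∩ Vinf ξ v ∩ InfBad ξ (bad C)) = 0 := fun C =>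
    bcstar v (bad C) C hv_dep hv_mono hv_fin hstay (hbad_dep C) (hwin C) h hμ1
  -- main inclusion
  have hsub : Ω1 ξ ∩ InfBad ξ (fun η n => HitAt Z₀ η k n)
      ⊆ (((Ω1 ξ ∩ {ω | ¬ ∃ C : ℕ, ∀ n,
            ibm barrier (fun i => ξ i ω) n (κ₁ : ℤ) ≤ (C:ℕ∞)})
          ∪ (Ω1 ξ ∩ {ω | ¬ ∃ c : ℕ, ∀ n, T Z₀ (fun i' => ξ i' ω) n (δ + (κ₁:ℤ))
              ≤ T barrier (fun i' => ξ i' ω) n (κ₁:ℤ) + c}))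
          ∪ (Ω1 ξ ∩ (Vinf ξ (fun η n => T barrier η n ((κ₁+1:ℕ) : ℤ)))ᶜ))
        ∪ ⋃ C : ℕ, (Ω1 ξ ∩ Vinf ξ v ∩ InfBad ξ (bad C)) := by
    rintro ω ⟨h1, h2⟩
    by_cases hA1 : ∃ C : ℕ, ∀ n, ibm barrier (fun i => ξ i ω) n (κ₁ : ℤ) ≤ (C:ℕ∞)
    swap
    · exact Or.inl (Or.inl (Or.inl ⟨h1, hA1⟩))
    by_cases hA2 : ∃ c : ℕ, ∀ n, T Z₀ (fun i' => ξ i' ω) n (δ + (κ₁:ℤ))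
        ≤ T barrier (fun i' => ξ i' ω) n (κ₁:ℤ) + c
    swap
    · exact Or.inl (Or.inl (Or.inr ⟨h1, hA2⟩))
    by_cases hA3 : ω ∈ Vinf ξ (fun η n => T barrier η n ((κ₁+1:ℕ) : ℤ))
    swap
    · exact Or.inl (Or.inr ⟨h1, hA3⟩)
    right
    obtain ⟨C₁, hC₁⟩ := hA1
    obtain ⟨c, hc⟩ := hA2
    -- bin k-1 of our process is bounded by C₁ + c
    have hbinO : ∀ n, ibm Z₀ (fun i' => ξ i' ω) n (k-1) ≤ ((C₁ + c : ℕ) : ℕ∞) := by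
      intro n
      set η : Path := fun i' => ξ i' ω with hη
      obtain ⟨M, hM⟩ := ibm_suppLE hZ₀ η n
      obtain ⟨Mb, hMb⟩ := ibm_suppLE nice_barrier η n
      have hOsplit : T Z₀ η n (k-1) = ibm Z₀ η n (k-1) + T Z₀ η n k := by
        have := tailSum_split_eq hM (k-1)
        rwa [show k - 1 + 1 = k by ring] at this
      have hBsplit : T barrier η n (κ₁:ℤ) = ibm barrier η n (κ₁:ℤ)
          + T barrier η n ((κ₁+1:ℕ) : ℤ) := by
        have := tailSum_split_eq hMb (κ₁:ℤ)
        rwa [hcast2] at this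
      have hdomk : T barrier η n ((κ₁+1:ℕ):ℤ) ≤ T Z₀ η n k := by
        have := hdom η h1 n ((κ₁+1:ℕ):ℤ) (by push_cast; omega)
        rwa [hcastk] at this
      have hchain : ibm Z₀ η n (k-1) + T Z₀ η n k
          ≤ ((C₁ + c : ℕ) : ℕ∞) + T Z₀ η n k := by
        calc ibm Z₀ η n (k-1) + T Z₀ η n k = T Z₀ η n (k-1) := hOsplit.symm
          _ = T Z₀ η n (δ + (κ₁:ℤ)) := by rw [hcast1]
          _ ≤ T barrier η n (κ₁:ℤ) + c := hc n
          _ = (ibm barrier η n (κ₁:ℤ) + T barrier η n ((κ₁+1:ℕ):ℤ)) + c := by rw [hBsplit]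
          _ ≤ ((C₁:ℕ∞) + T Z₀ η n k) + c := add_le_add (add_le_add (hC₁ n) hdomk) le_rfl
          _ = ((C₁ + c : ℕ) : ℕ∞) + T Z₀ η n k := by push_cast; ring
      have hTfin : T Z₀ η n k ≠ ⊤ := hv_fin η h1 n
      exact (WithTop.add_le_add_iff_right hTfin).mp hchain
    refine Set.mem_iUnion.mpr ⟨C₁ + c, ⟨h1, ?_⟩, ?_⟩
    · -- Vinf for v from A3 and domination
      intro t
      obtain ⟨n, hn⟩ := hA3 t
      refine ⟨n, lt_of_lt_of_le hn ?_⟩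
      have := hdom (fun i' => ξ i' ω) h1 n ((κ₁+1:ℕ):ℤ) (by push_cast; omega)
      rwa [hcastk] at this
    · -- infinitely many bad
      intro N
      obtain ⟨n, hn, hhit⟩ := h2 N
      exact ⟨n, hn, hhit, fun i _ => hbinO i⟩
  refine measure_mono_null hsub ?_
  refine measure_union_null (measure_union_null (measure_union_null A1 A2) A3) ?_
  refine le_antisymm (le_trans (measure_iUnion_le _) ?_) zero_le
  simp only [hbc, tsum_zero, le_refl]

end S13
end

noncomputable section
namespace S13
set_option linter.unusedSectionVars false

variable {Ω : Type*} [MeasurableSpace Ω] {P : Measure Ω} [IsProbabilityMeasure P]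
  {μ : Measure ℕ} [IsProbabilityMeasure μ] {ξ : ℕ → Ω → ℕ}

lemma measure_univ_tsum : (μ Set.univ) = ∑' s : ℕ, μ {s} := by
  have h1 := measure_setOf_ge (μ := μ) 0
  have h2 : {x : ℕ | 0 ≤ x} = Set.univ := by ext x; simp
  rw [h2] at h1
  rw [h1]
  exact tsum_congr (fun s => by rw [Nat.zero_add])

lemma mu_one_ne_zero (hμ0 : μ {0} = 0)
    (hmono : ∀ m n : ℕ, 1 ≤ m → m ≤ n → μ {n} ≤ μ {m}) : μ {1} ≠ 0 := by
  intro h1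
  have hall : ∀ m : ℕ, μ {m} = 0 := by
    intro m
    rcases Nat.eq_zero_or_pos m with rfl | hm
    · exact hμ0
    · exact le_antisymm (h1 ▸ hmono 1 m le_rfl hm) zero_le
  have := measure_univ_tsum (μ := μ)
  rw [measure_univ] at this
  simp only [hall, tsum_zero] at this
  exact one_ne_zero this

/-- pattern path from a finite tuple -/
def pat {N : ℕ} (a : Fin N → ℕ) : Path := fun i => if h : i < N then a ⟨i, h⟩ else 1

end S13
end


set_option maxHeartbeats 2000000 in
open S13 in
/-- Assume `(μ(n), n ≥ 1)` is non-increasing with finite type `d`. Let `X₀`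
be locally finite with front at `0`, and for `δ < 0` let `X₀^(δ)` be `X₀` with an infinite
barrier placed at `δ`. Then for any `δ, k` with `δ + d < k ≤ 0`, with positive probability
no ball is ever added to bin `k` by the IBM(μ) started from `X₀^(δ)`. -/
theorem stmt13 {Ω : Type*} [MeasurableSpace Ω] (P : Measure Ω) [IsProbabilityMeasure P]
    (μ : Measure ℕ) [IsProbabilityMeasure μ] (hμ0 : μ {0} = 0)
    (hmono : ∀ m n : ℕ, 1 ≤ m → m ≤ n → μ {n} ≤ μ {m})
    (ξ : ℕ → Ω → ℕ) (hξ : IsIIDSeq P μ ξ)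
    (d : ℕ) (htype : IsTypeOf P ξ (d : ℕ∞))
    (X₀ : Config) (hloc : ∀ j : ℤ, X₀ j < ⊤)
    (hfront : X₀ 0 ≠ 0 ∧ ∀ j : ℤ, 0 < j → X₀ j = 0)
    (δ k : ℤ) (hδ : δ < 0) (hδk : δ + (d : ℤ) < k) (hk0 : k ≤ 0) :
    0 < P {ω | ibmLimit (fun j => if j = δ then ⊤ else X₀ j) (fun i => ξ i ω) k =
        (if k = δ then ⊤ else X₀ k)} := by
  classical
  have hμ1 : μ {1} ≠ 0 := mu_one_ne_zero hμ0 hmono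
  set Z₀ : Config := fun j => if j = δ then ⊤ else X₀ j with hZ₀def
  -- Z₀ is nice
  have hsupp : SuppLE Z₀ 0 := by
    intro i hi
    rw [hZ₀def]
    simp only
    rw [if_neg (by omega)]
    exact hfront.2 i hi
  have hZ₀ : Nice Z₀ δ := by
    refine ⟨⟨0, hsupp⟩, ?_⟩
    rw [← top_le_iff]
    calc (⊤:ℕ∞) = Z₀ δ := by rw [hZ₀def]; simp
      _ = ∑ i ∈ Finset.Icc δ δ, Z₀ i := by rw [Finset.Icc_self, Finset.sum_singleton]
      _ ≤ tailSum Z₀ δ := le_iSup (fun m => ∑ i ∈ Finset.Icc δ m, Z₀ i) δ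
  have hfin : ∀ j : ℤ, δ < j → tailSum Z₀ j ≠ ⊤ := by
    intro j hj
    rw [tailSum_eq_sum hsupp j, ENat.sum_ne_top]
    intro i hi
    simp only [Finset.mem_Icc] at hi
    rw [hZ₀def]
    simp only
    rw [if_neg (by omega)]
    exact (hloc i).ne
  -- extract consequences of the type hypothesis
  have hμP : P ≠ 0 := IsProbabilityMeasure.ne_zero P
  have hd1 : 1 ≤ d := by
    have hne : (MeasureTheory.ae P).NeBot := MeasureTheory.ae_neBot.mpr hμP
    obtain ⟨ω, hω⟩ := htype.exists
    by_contra hd0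
    have hd : d = 0 := by omega
    subst hd
    -- sInf S = 0 but all elements of S are ≥ 1
    have h01 : sInf {k' : ℕ∞ | ∃ m : ℕ, 1 ≤ m ∧ k' = (m : ℕ∞) ∧
        ibmLimit barrier (fun i => ξ i ω) (m : ℤ) < ⊤} < 1 := by
      rw [hω]
      exact_mod_cast zero_lt_one
    rw [sInf_lt_iff] at h01
    obtain ⟨a, ⟨m, hm1, rfl, -⟩, ha⟩ := h01
    have : m < 1 := by exact_mod_cast ha
    omega
  have hbase : P (Ω1 ξ ∩ {ω | ¬ ∃ C : ℕ, ∀ n,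
      ibm barrier (fun i => ξ i ω) n (d : ℤ) ≤ (C:ℕ∞)}) = 0 := by
    have hae : P {ω | ¬ (sInf {k' : ℕ∞ | ∃ m : ℕ, 1 ≤ m ∧ k' = (m : ℕ∞) ∧
        ibmLimit barrier (fun i => ξ i ω) (m : ℤ) < ⊤} = (d:ℕ∞))} = 0 := htype
    refine measure_mono_null ?_ hae
    rintro ω ⟨-, h2⟩
    simp only [Set.mem_setOf_eq]
    intro heq
    apply h2
    -- from sInf = d and d < ⊤, d belongs to the set
    have hlt : sInf {k' : ℕ∞ | ∃ m : ℕ, 1 ≤ m ∧ k' = (m : ℕ∞) ∧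
        ibmLimit barrier (fun i => ξ i ω) (m : ℤ) < ⊤} < ((d+1:ℕ):ℕ∞) := by
      rw [heq]
      exact_mod_cast Nat.lt_succ_self d
    rw [sInf_lt_iff] at hlt
    obtain ⟨a, ⟨m, hm1, rfl, hmlim⟩, ha⟩ := hlt
    have hge : (d:ℕ∞) ≤ (m:ℕ∞) := heq ▸ sInf_le ⟨m, hm1, rfl, hmlim⟩
    have hmd : m = d := by
      have h1 : m < d + 1 := by exact_mod_cast ha
      have h2 : d ≤ m := by exact_mod_cast hge
      omega
    subst hmd
    -- bounded bin
    have hfin' : ibmLimit barrier (fun i => ξ i ω) (m : ℤ) ≠ ⊤ := hmlim.ne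
    refine ⟨(ibmLimit barrier (fun i => ξ i ω) (m : ℤ)).toNat, fun n => ?_⟩
    rw [ENat.coe_toNat hfin']
    exact le_iSup (fun n => ibm barrier (fun i => ξ i ω) n (m:ℤ)) n
  -- bin k of our process is hit finitely often a.s.
  have hfq := final_null hξ hμ1 hZ₀ hfin d hd1 hbase hδk
  -- basic facts about Z₀ at k
  have hT0k : 1 ≤ tailSum Z₀ k := by
    rw [ENat.one_le_iff_ne_zero]
    intro hzero
    rw [tailSum_eq_sum hsupp k] at hzero
    have h0mem : (0:ℤ) ∈ Finset.Icc k 0 := by simp [hk0]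
    have h00 := Finset.sum_eq_zero_iff.mp hzero 0 h0mem
    rw [hZ₀def] at h00
    simp only at h00
    rw [if_neg (by omega)] at h00
    exact hfront.1 h00
  -- choose N with positive probability of no hits from N on
  have hcover : (Set.univ : Set Ω) ⊆ (⋃ N : ℕ,
      (Ω1 ξ ∩ {ω | ∀ n, N ≤ n → ¬ HitAt Z₀ (fun i => ξ i ω) k n}))
      ∪ (Ω1 ξ)ᶜ ∪ (Ω1 ξ ∩ InfBad ξ (fun η n => HitAt Z₀ η k n)) := by
    intro ω _
    by_cases h1 : ω ∈ Ω1 ξ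
    swap
    · exact Or.inl (Or.inr h1)
    by_cases h2 : ω ∈ InfBad ξ (fun η n => HitAt Z₀ η k n)
    · exact Or.inr ⟨h1, h2⟩
    · left; left
      simp only [InfBad, Set.mem_setOf_eq] at h2
      push_neg at h2
      obtain ⟨N, hN⟩ := h2
      exact Set.mem_iUnion.mpr ⟨N, h1, fun n hn hhit => (hN n hn) hhit⟩
  have hposU : 0 < P (⋃ N : ℕ,
      (Ω1 ξ ∩ {ω | ∀ n, N ≤ n → ¬ HitAt Z₀ (fun i => ξ i ω) k n})) := by
    by_contra hc
    push_neg at hc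
    have hc0 : P (⋃ N : ℕ,
        (Ω1 ξ ∩ {ω | ∀ n, N ≤ n → ¬ HitAt Z₀ (fun i => ξ i ω) k n})) = 0 :=
      le_antisymm hc zero_le
    have hone : (1:ℝ≥0∞) ≤ 0 := by
      calc (1:ℝ≥0∞) = P Set.univ := measure_univ.symm
        _ ≤ P ((⋃ N : ℕ, (Ω1 ξ ∩ {ω | ∀ n, N ≤ n → ¬ HitAt Z₀ (fun i => ξ i ω) k n}))
            ∪ (Ω1 ξ)ᶜ ∪ (Ω1 ξ ∩ InfBad ξ (fun η n => HitAt Z₀ η k n))) :=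
          measure_mono hcover
        _ ≤ (P (⋃ N : ℕ, (Ω1 ξ ∩ {ω | ∀ n, N ≤ n → ¬ HitAt Z₀ (fun i => ξ i ω) k n}))
            + P ((Ω1 ξ)ᶜ)) + P (Ω1 ξ ∩ InfBad ξ (fun η n => HitAt Z₀ η k n)) :=
          le_trans (measure_union_le _ _) (add_le_add (measure_union_le _ _) le_rfl)
        _ = 0 := by rw [hc0, Ω1_compl_null hξ hμ0, hfq]; simp
    simp at hone
  obtain ⟨N, hNpos⟩ : ∃ N : ℕ, 0 < P (Ω1 ξ ∩ {ω | ∀ n, N ≤ n →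
      ¬ HitAt Z₀ (fun i => ξ i ω) k n}) := by
    by_contra hc
    push_neg at hc
    have hz : ∀ N : ℕ, P (Ω1 ξ ∩ {ω | ∀ n, N ≤ n →
        ¬ HitAt Z₀ (fun i => ξ i ω) k n}) = 0 := fun N => le_antisymm (hc N) zero_le
    have hle : P (⋃ N : ℕ, (Ω1 ξ ∩ {ω | ∀ n, N ≤ n → ¬ HitAt Z₀ (fun i => ξ i ω) k n}))
        ≤ ∑' N : ℕ, P (Ω1 ξ ∩ {ω | ∀ n, N ≤ n → ¬ HitAt Z₀ (fun i => ξ i ω) k n}) :=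
      measure_iUnion_le _
    simp only [hz, tsum_zero] at hle
    exact absurd (lt_of_lt_of_le hposU hle) (by simp)
  -- decompose over prefixes
  set Dset : (Fin N → ℕ) → Set Ω := fun a =>
    {ω | ∀ M : ℕ, ¬ HitAt (ibm Z₀ (pat a) N) (fun i => ξ (N+i) ω) k M} with hDset
  have hANsub : Ω1 ξ ∩ {ω | ∀ n, N ≤ n → ¬ HitAt Z₀ (fun i => ξ i ω) k n}
      ⊆ ⋃ a : Fin N → ℕ, (cylSet ξ 0 N (pat a) ∩ Dset a ∩ Ω1 ξ) := by
    rintro ω ⟨h1, h2⟩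
    refine Set.mem_iUnion.mpr ⟨fun i : Fin N => ξ i ω, ⟨⟨?_, ?_⟩, h1⟩⟩
    · intro i hi
      show ξ (0+i) ω = pat (fun i' : Fin N => ξ i' ω) i
      rw [Nat.zero_add]
      simp only [pat]
      rw [dif_pos hi]
    · intro M
      have hagr : ∀ i, i < N → pat (fun i' : Fin N => ξ i' ω) i = ξ i ω := by
        intro i hi; simp only [pat]; rw [dif_pos hi]
      rw [show ibm Z₀ (pat (fun i' : Fin N => ξ i' ω)) N
          = ibm Z₀ (fun i => ξ i ω) N from ibm_congr hagr]
      exact fun hh => h2 (N+M) (by omega)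
        ((HitAt_restart Z₀ (fun i => ξ i ω) k N M).mpr hh)
  obtain ⟨a, hapos⟩ : ∃ a : Fin N → ℕ,
      0 < P (cylSet ξ 0 N (pat a) ∩ Dset a ∩ Ω1 ξ) := by
    by_contra hc
    push_neg at hc
    have hz : ∀ a : Fin N → ℕ, P (cylSet ξ 0 N (pat a) ∩ Dset a ∩ Ω1 ξ) = 0 :=
      fun a' => le_antisymm (hc a') zero_le
    have hle1 : P (⋃ a : Fin N → ℕ, (cylSet ξ 0 N (pat a) ∩ Dset a ∩ Ω1 ξ))
        ≤ ∑' a : Fin N → ℕ, P (cylSet ξ 0 N (pat a) ∩ Dset a ∩ Ω1 ξ) :=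
      measure_iUnion_le _
    have hle := le_trans (measure_mono hANsub) hle1
    simp only [hz, tsum_zero] at hle
    exact absurd (lt_of_lt_of_le hNpos hle) (by simp)
  have hcylpos : 0 < P (cylSet ξ 0 N (pat a)) :=
    lt_of_lt_of_le hapos (measure_mono (fun ω hω => hω.1.1))
  have hDpos : 0 < P (Dset a) :=
    lt_of_lt_of_le hapos (measure_mono (fun ω hω => hω.1.2))
  have hfac : ∀ i, i < N → μ {pat a i} ≠ 0 := by
    intro i hi
    have hp := cylSet_prob hξ 0 N (pat a)
    rw [hp] at hcylpos
    exact (Finset.prod_ne_zero_iff.mp (ne_of_gt hcylpos)) i (Finset.mem_range.mpr hi)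
  have hpat1 : OnePath (pat a) := by
    intro i
    by_cases hi : i < N
    · rcases Nat.eq_zero_or_pos (pat a i) with h0 | h1
      · exact absurd (h0 ▸ hfac i hi) (fun hcc => hcc hμ0)
      · exact h1
    · simp only [pat]; rw [dif_neg hi]
  -- surgery
  set η' : Path := surg Z₀ (pat a) k with hη'def
  obtain ⟨keyT, noHit⟩ := surgery hZ₀ hpat1 hT0k
  have hη'1 : OnePath η' := surg_onePath hpat1
  have hcyl'pos : 0 < P (cylSet ξ 0 N η') := by
    rw [cylSet_prob hξ, pos_iff_ne_zero, Finset.prod_ne_zero_iff]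
    intro i hi
    rw [hη'def]
    show μ {surg Z₀ (pat a) k i} ≠ 0
    unfold surg
    split
    · exact hμ1
    · exact hfac i (Finset.mem_range.mp hi)
  -- independence split
  have hsplit : P (cylSet ξ 0 N η' ∩ Dset a) = P (cylSet ξ 0 N η') * P (Dset a) := by
    have hp : DepOn (fun η : Path => ∀ i, i < N → η i = η' i) 0 N := by
      intro η₁ η₂ hagr hh i hi
      rw [← hagr i (by omega) (by omega)]
      exact hh i hi
    have hq : ∀ M : ℕ, DepOn (fun η : Path =>
        ¬ HitAt (ibm Z₀ (pat a) N) (fun i => η (N+i)) k M) N (M+1) := by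
      intro M η₁ η₂ hagr hh hc
      exact hh ((HitAt_congr (fun i hi => (hagr (N+i) (by omega) (by omega)).symm)).mp hc)
    have hcyl_evt : cylSet ξ 0 N η' = evt ξ (fun η : Path => ∀ i, i < N → η i = η' i) := by
      ext ω
      simp only [cylSet, evt, Set.mem_setOf_eq]
      constructor
      · intro hω i hi
        have := hω i hi
        rwa [Nat.zero_add] at this
      · intro hω i hi
        rw [Nat.zero_add]
        exact hω i hi
    have hD_evt : Dset a = ⋂ M : ℕ, evt ξ (fun η : Path =>
        ¬ HitAt (ibm Z₀ (pat a) N) (fun i => η (N+i)) k M) := by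
      ext ω
      simp only [hDset, evt, Set.mem_iInter, Set.mem_setOf_eq]
    rw [hcyl_evt, hD_evt]
    exact tail_block_mul hξ _ N hp _ hq
  -- the final inclusion
  have hfinal_sub : cylSet ξ 0 N η' ∩ Dset a ∩ Ω1 ξ
      ⊆ {ω | ibmLimit Z₀ (fun i => ξ i ω) k = Z₀ k} := by
    rintro ω ⟨⟨hcyl, hD⟩, h1⟩
    simp only [Set.mem_setOf_eq]
    refine ibmLimit_of_noHit (fun n => ?_)
    have hagr' : ∀ i, i < N → (fun i' => ξ i' ω) i = η' i := by
      intro i hi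
      have := hcyl i hi
      rwa [Nat.zero_add] at this
    rcases Nat.lt_or_ge n N with hn | hn
    · intro hhit
      exact noHit n ((HitAt_congr (fun i hi => hagr' i (by omega))).mp hhit)
    · obtain ⟨M, rfl⟩ : ∃ M, n = N + M := ⟨n - N, by omega⟩
      intro hhit
      have h1' : HitAt (ibm Z₀ (fun i => ξ i ω) N) (fun i => ξ (N+i) ω) k M :=
        (HitAt_restart Z₀ (fun i => ξ i ω) k N M).mp hhit
      have he : ibm Z₀ (fun i => ξ i ω) N = ibm Z₀ η' N := ibm_congr hagr'
      rw [he] at h1'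
      have hζ1 : OnePath (fun i => ξ (N+i) ω) := fun i => h1 (N+i)
      have hprop := HitAt_propagate (nice_ibm hZ₀ hη'1 N) (nice_ibm hZ₀ hpat1 N)
        hζ1 (fun j hj => keyT N j hj) M
      exact hD M (hprop.mp h1')
  -- conclude
  have hPP : 0 < P (cylSet ξ 0 N η' ∩ Dset a) := by
    rw [hsplit]
    exact ENNReal.mul_pos (ne_of_gt hcyl'pos) (ne_of_gt hDpos)
  have hwithΩ1 : 0 < P (cylSet ξ 0 N η' ∩ Dset a ∩ Ω1 ξ) := by
    by_contra hc
    push_neg at hc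
    have hc0 : P (cylSet ξ 0 N η' ∩ Dset a ∩ Ω1 ξ) = 0 := le_antisymm hc zero_le
    have hsub2 : cylSet ξ 0 N η' ∩ Dset a
        ⊆ (cylSet ξ 0 N η' ∩ Dset a ∩ Ω1 ξ) ∪ (Ω1 ξ)ᶜ := by
      intro ω hω
      by_cases h1 : ω ∈ Ω1 ξ
      · exact Or.inl ⟨hω, h1⟩
      · exact Or.inr h1
    have hle2a : P ((cylSet ξ 0 N η' ∩ Dset a ∩ Ω1 ξ) ∪ (Ω1 ξ)ᶜ)
        ≤ P (cylSet ξ 0 N η' ∩ Dset a ∩ Ω1 ξ) + P ((Ω1 ξ)ᶜ) := measure_union_le _ _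
    have hle2 := le_trans (measure_mono hsub2) hle2a
    rw [hc0, Ω1_compl_null hξ hμ0, add_zero] at hle2
    exact absurd (lt_of_lt_of_le hPP hle2) (by simp)
  exact lt_of_lt_of_le hwithΩ1 (measure_mono hfinal_sub)
end

section
/- A probability distribution μ on ℕ is of type 1, i.e. the IBM(μ) started from the barrier configuration X̂₀ satisfies X̂_∞(1) < ∞ almost surely, if and only if μ has a first moment: ∑_{n≥1} n μ(n) < ∞. -/
open MeasureTheory ProbabilityTheory Filter Set
open scoped ENNReal Topology Classical

namespace Stmt18Aux

open MeasureTheory ProbabilityTheory Filter Set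
open scoped ENNReal Topology Classical

lemma tailSum_le (X : Config) {j j' : ℤ} (h : j ≤ j') : tailSum X j' ≤ tailSum X j :=
  iSup_mono fun m => Finset.sum_le_sum_of_subset (Finset.Icc_subset_Icc_left h)

lemma tailSum_eq_top (X : Config) (h0 : X 0 = ⊤) {j : ℤ} (hj : j ≤ 0) : tailSum X j = ⊤ := by
  have h1 : (⊤ : ℕ∞) ≤ ∑ i ∈ Finset.Icc j 0, X i := by
    refine le_trans (le_of_eq h0.symm) ?_
    exact Finset.single_le_sum (f := X) (fun i _ => zero_le)
      (by simp [Finset.mem_Icc, hj])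
  exact top_le_iff.mp (le_trans h1 (le_iSup (fun m => ∑ i ∈ Finset.Icc j m, X i) 0))

lemma tailSum_eq_zero (X : Config) {j : ℤ} (h : ∀ i, j ≤ i → X i = 0) : tailSum X j = 0 := by
  refine le_antisymm (iSup_le fun m => le_of_eq ?_) zero_le
  exact Finset.sum_eq_zero fun i hi => h i (Finset.mem_Icc.mp hi).1

lemma tailSum_add_single (X : Config) {p j : ℤ} (hjp : j ≤ p) :
    tailSum (fun i => X i + if i = p then 1 else 0) j = tailSum X j + 1 := by
  have hsum : ∀ m : ℤ, p ≤ m →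
      ∑ i ∈ Finset.Icc j m, (X i + if i = p then 1 else 0)
        = (∑ i ∈ Finset.Icc j m, X i) + 1 := by
    intro m hm
    rw [Finset.sum_add_distrib, Finset.sum_ite_eq' (Finset.Icc j m) p (fun _ => (1 : ℕ∞)),
      if_pos (Finset.mem_Icc.mpr ⟨hjp, hm⟩)]
  apply le_antisymm
  · refine iSup_le fun m => ?_
    have hsub : Finset.Icc j m ⊆ Finset.Icc j (max m p) :=
      Finset.Icc_subset_Icc_right (le_max_left _ _)
    calc ∑ i ∈ Finset.Icc j m, (X i + if i = p then 1 else 0)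
        ≤ ∑ i ∈ Finset.Icc j (max m p), (X i + if i = p then 1 else 0) :=
          Finset.sum_le_sum_of_subset hsub
      _ = (∑ i ∈ Finset.Icc j (max m p), X i) + 1 := hsum _ (le_max_right _ _)
      _ ≤ tailSum X j + 1 :=
          add_le_add_left (le_iSup (fun m => ∑ i ∈ Finset.Icc j m, X i) _) 1
  · rw [tailSum, ENat.iSup_add]
    refine iSup_le fun m => ?_
    have hsub : Finset.Icc j m ⊆ Finset.Icc j (max m p) :=
      Finset.Icc_subset_Icc_right (le_max_left _ _)
    calc (∑ i ∈ Finset.Icc j m, X i) + 1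
        ≤ (∑ i ∈ Finset.Icc j (max m p), X i) + 1 :=
          add_le_add_left (Finset.sum_le_sum_of_subset hsub) 1
      _ = ∑ i ∈ Finset.Icc j (max m p), (X i + if i = p then 1 else 0) :=
          (hsum _ (le_max_right _ _)).symm
      _ ≤ tailSum (fun i => X i + if i = p then 1 else 0) j :=
          le_iSup (fun m => ∑ i ∈ Finset.Icc j m, (X i + if i = p then 1 else 0)) _

lemma phi_step (X : Config) (q : ℕ) (hq : 1 ≤ q) (h0 : X 0 = ⊤) (n : ℕ)
    (hbd : ∀ i : ℤ, (n : ℤ) < i → X i = 0) :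
    ∃ k : ℕ, 1 ≤ k ∧ k ≤ n + 1 ∧
      (Phi q X = fun j => X j + if j = (k : ℤ) then 1 else 0) ∧
      (k = 1 ↔ ¬ (q : ℕ∞) ≤ tailSum X 1) := by
  have htop : ∀ j : ℤ, j ≤ 0 → tailSum X j = ⊤ := fun j hj => tailSum_eq_top X h0 hj
  have hzero : ¬ (q : ℕ∞) ≤ tailSum X (((n + 1 : ℕ) : ℤ)) := by
    rw [tailSum_eq_zero X (fun i hi => hbd i (by omega))]
    intro hle
    have h1 : (q : ℕ∞) = 0 := le_antisymm hle zero_le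
    rw [Nat.cast_eq_zero] at h1
    omega
  have hex : ∃ m : ℕ, ¬ (q : ℕ∞) ≤ tailSum X (m : ℤ) := ⟨n + 1, hzero⟩
  set k := Nat.find hex with hk
  have hkspec : ¬ (q : ℕ∞) ≤ tailSum X (k : ℤ) := Nat.find_spec hex
  have hkmin : ∀ m : ℕ, m < k → (q : ℕ∞) ≤ tailSum X (m : ℤ) :=
    fun m hm => not_not.mp (Nat.find_min hex hm)
  have hk1 : 1 ≤ k := by
    rcases Nat.eq_zero_or_pos k with h | h
    · exfalso
      apply hkspec
      rw [h, Nat.cast_zero, htop 0 le_rfl]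
      exact le_top
    · exact h
  have hkn : k ≤ n + 1 := Nat.find_le hzero
  refine ⟨k, hk1, hkn, ?_, ?_⟩
  · funext j
    have hiff : ((q : ℕ∞) ≤ tailSum X (j - 1) ∧ ¬ (q : ℕ∞) ≤ tailSum X j) ↔ j = (k : ℤ) := by
      constructor
      · rintro ⟨h1, h2⟩
        have hj1 : 1 ≤ j := by
          by_contra hcon
          push_neg at hcon
          exact h2 (by rw [htop j (by omega)]; exact le_top)
        lift j to ℕ using (by omega : (0 : ℤ) ≤ j) with m
        have hm1 : 1 ≤ m := by exact_mod_cast hj1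
        have hkm : k ≤ m := Nat.find_le h2
        have hmk : m ≤ k := by
          by_contra hcon
          push_neg at hcon
          have hle : tailSum X ((m : ℤ) - 1) ≤ tailSum X (k : ℤ) :=
            tailSum_le X (by omega)
          exact hkspec (le_trans h1 hle)
        exact_mod_cast le_antisymm hmk hkm
      · rintro rfl
        refine ⟨?_, hkspec⟩
        have h1 := hkmin (k - 1) (by omega)
        rw [show ((k : ℤ) - 1) = (((k - 1 : ℕ) : ℤ)) by omega]
        exact h1
    show X j + _ = X j + _
    rw [if_congr hiff rfl rfl]
  · constructor
    · intro h
      have := hkspec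
      rw [h] at this
      simpa using this
    · intro h
      have hle : k ≤ 1 := Nat.find_le (by simpa using h)
      omega

lemma ibm_inv (ξs : ℕ → ℕ) (hξ1 : ∀ n, 1 ≤ ξs n) :
    ∀ n : ℕ, ibm barrier ξs n 0 = ⊤ ∧ (∀ i : ℤ, (n : ℤ) < i → ibm barrier ξs n i = 0) ∧
      tailSum (ibm barrier ξs n) 1 = (n : ℕ∞) ∧
      ibm barrier ξs n 1 = (((Finset.range n).filter fun i => i + 1 ≤ ξs i).card : ℕ∞) := by
  intro n
  induction n with
  | zero =>
    refine ⟨by simp [ibm, barrier], fun i hi => by simp only [ibm, barrier]; rw [if_neg (by omega)], ?_, by simp [ibm, barrier]⟩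
    show tailSum barrier 1 = ((0 : ℕ) : ℕ∞)
    rw [tailSum_eq_zero barrier (fun i hi => by simp only [barrier]; rw [if_neg (by omega)])]
    simp
  | succ n ih =>
    obtain ⟨h0, hbd, hts, hone⟩ := ih
    obtain ⟨k, hk1, hkn, hPhi, hkiff⟩ :=
      phi_step (ibm barrier ξs n) (ξs n) (hξ1 n) h0 n hbd
    have hibm : ibm barrier ξs (n + 1) = Phi (ξs n) (ibm barrier ξs n) := rfl
    refine ⟨?_, ?_, ?_, ?_⟩
    · rw [hibm, hPhi]
      simp [h0]
    · intro i hi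
      rw [hibm, hPhi]
      have h1 : ibm barrier ξs n i = 0 := hbd i (by omega)
      have hne : i ≠ (k : ℤ) := by omega
      simp [h1, hne]
    · rw [hibm, hPhi, tailSum_add_single _ (by exact_mod_cast hk1), hts]
      push_cast
      ring
    · rw [hibm, hPhi]
      have hcond : ((1 : ℤ) = (k : ℤ)) ↔ (n + 1 ≤ ξs n) := by
      -- (1:ℤ) = k ↔ k = 1 ↔ ¬ ξs n ≤ tailSum X 1 = n ↔ n < ξs n
        rw [show ((1 : ℤ) = (k : ℤ)) ↔ k = 1 by constructor <;> (intro h; omega)]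
        rw [hkiff, hts]
        rw [show ((ξs n : ℕ∞) ≤ (n : ℕ∞)) ↔ ξs n ≤ n from Nat.cast_le]
        omega
      show ibm barrier ξs n 1 + _ = _
      rw [Finset.range_add_one, Finset.filter_insert]
      by_cases h : n + 1 ≤ ξs n
      · rw [if_pos h, Finset.card_insert_of_notMem (by simp), hone,
          if_pos (hcond.mpr h)]
        push_cast
        ring
      · rw [if_neg h, hone, if_neg (fun hc => h (hcond.mp hc))]
        simp

lemma limit_iff (ξs : ℕ → ℕ) (hξ1 : ∀ n, 1 ≤ ξs n) :
    ibmLimit barrier ξs 1 < ⊤ ↔ {i : ℕ | i + 1 ≤ ξs i}.Finite := by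
  have hone := fun n => (ibm_inv ξs hξ1 n).2.2.2
  rw [ibmLimit]
  constructor
  · intro h
    by_contra hinf
    have hinf2 : {i : ℕ | i + 1 ≤ ξs i}.Infinite := hinf
    have htopeq : (⨆ n, ibm barrier ξs n 1) = ⊤ := by
      rw [iSup_eq_top]
      intro b hb
      lift b to ℕ using hb.ne
      obtain ⟨t, hts, htc⟩ := hinf2.exists_subset_card_eq (b + 1)
      set N := (t.sup id) + 1 with hN
      have hsub : t ⊆ (Finset.range N).filter (fun i => i + 1 ≤ ξs i) := by
        intro i hi
        rw [Finset.mem_filter, Finset.mem_range]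
        exact ⟨by have := Finset.le_sup (f := id) hi; simp only [id] at this; omega, hts hi⟩
      have hcard : b + 1 ≤ ((Finset.range N).filter (fun i => i + 1 ≤ ξs i)).card :=
        htc ▸ Finset.card_le_card hsub
      refine ⟨N, ?_⟩
      rw [hone N]
      exact_mod_cast Nat.lt_of_lt_of_le (Nat.lt_succ_self b) hcard
    rw [htopeq] at h
    exact lt_irrefl _ h
  · intro h
    refine lt_of_le_of_lt (iSup_le fun n => ?_)
      (show ((h.toFinset.card : ℕ∞)) < ⊤ from WithTop.coe_lt_top _)
    rw [hone n]
    have hsub : (Finset.range n).filter (fun i => i + 1 ≤ ξs i) ⊆ h.toFinset := by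
      intro i hi
      rw [Set.Finite.mem_toFinset]
      exact (Finset.mem_filter.mp hi).2
    exact_mod_cast Finset.card_le_card hsub

end Stmt18Aux


/-- `μ` is of type 1, i.e. `X̂_∞(1) < ∞` a.s. for the IBM(μ) started from
the barrier configuration, if and only if `μ` has a first moment: `∑ n μ(n) < ∞`. -/
theorem stmt18 {Ω : Type*} [MeasurableSpace Ω] (P : Measure Ω) [IsProbabilityMeasure P]
    (μ : Measure ℕ) [IsProbabilityMeasure μ] (hμ0 : μ {0} = 0)
    (ξ : ℕ → Ω → ℕ) (hξ : IsIIDSeq P μ ξ) :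
    (∀ᵐ ω ∂P, ibmLimit barrier (fun i => ξ i ω) 1 < ⊤) ↔
      ∑' n : ℕ, (n : ℝ≥0∞) * μ {n} < ⊤ := by
  classical
  obtain ⟨hmeas, hind, hmap⟩ := hξ
  have hNat : ∀ s : Set ℕ, MeasurableSet s := fun s => trivial
  set A : ℕ → Set Ω := fun n => ξ n ⁻¹' {m | n + 1 ≤ m} with hAdef
  have hAm : ∀ n, MeasurableSet (A n) := fun n => hmeas n (hNat _)
  have hPA : ∀ n, P (A n) = μ {m | n + 1 ≤ m} := fun n => by
    rw [hAdef, ← hmap n, Measure.map_apply (hmeas n) (hNat _)]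
  -- a.s. all ξ n ≥ 1
  have hpos : ∀ᵐ ω ∂P, ∀ n, 1 ≤ ξ n ω := by
    rw [ae_all_iff]
    intro n
    have h0 : P (ξ n ⁻¹' {0}) = 0 := by
      rw [← Measure.map_apply (hmeas n) (hNat _), hmap n]; exact hμ0
    have hset : {ω | ¬ 1 ≤ ξ n ω} = ξ n ⁻¹' {0} := by
      ext ω; simp [Nat.lt_one_iff]
    rw [ae_iff, hset]
    exact h0
  -- translate LHS into limsup
  have hiff : ∀ᵐ ω ∂P,
      (ibmLimit barrier (fun i => ξ i ω) 1 < ⊤ ↔ ω ∉ limsup A atTop) := by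
    filter_upwards [hpos] with ω hω
    rw [Stmt18Aux.limit_iff _ hω, mem_limsup_iff_frequently_mem,
      Nat.frequently_atTop_iff_infinite]
    have : {n | ω ∈ A n} = {i : ℕ | i + 1 ≤ ξ i ω} := rfl
    rw [this, ← Set.not_infinite]
  have hlim : (∀ᵐ ω ∂P, ibmLimit barrier (fun i => ξ i ω) 1 < ⊤) ↔
      P (limsup A atTop) = 0 := by
    rw [measure_eq_zero_iff_ae_notMem]
    exact eventually_congr hiff
  -- independence of the events A n
  have hiIndepSet : iIndepSet A P := by
    rw [iIndepSet_iff_iIndep]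
    have h1 : iIndep (fun n => MeasurableSpace.comap (ξ n) inferInstance) P :=
      (iIndepFun_iff_iIndep _ _ _).mp hind
    have hle : ∀ i, MeasurableSpace.generateFrom {A i}
        ≤ MeasurableSpace.comap (ξ i) inferInstance := by
      intro i
      refine MeasurableSpace.generateFrom_le ?_
      rintro t ht
      rw [Set.mem_singleton_iff] at ht
      subst ht
      exact ⟨{m | i + 1 ≤ m}, hNat _, rfl⟩
    rw [iIndep_iff] at h1 ⊢
    intro s f hf
    exact h1 s fun i hi => hle i _ (hf i hi)
  -- the sum identity
  have hmeasone : ∀ S : Set ℕ, μ S = ∑' m : ℕ, S.indicator (fun m => μ {m}) m := by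
    intro S
    have h2 := tsum_measure_preimage_singleton (μ := μ) (Set.to_countable S)
      (f := id) (fun y _ => hNat _)
    simp only [Set.preimage_id] at h2
    rw [← h2]
    exact tsum_subtype S (fun m => μ {m})
  have hsum : ∑' n, P (A n) = ∑' m : ℕ, (m : ℝ≥0∞) * μ {m} := by
    calc ∑' n, P (A n) = ∑' n : ℕ, ∑' m : ℕ,
          ({m : ℕ | n + 1 ≤ m}).indicator (fun m => μ {m}) m := by
          refine tsum_congr fun n => ?_
          rw [hPA n, hmeasone]
      _ = ∑' m : ℕ, ∑' n : ℕ,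
          ({m : ℕ | n + 1 ≤ m}).indicator (fun m => μ {m}) m := ENNReal.tsum_comm
      _ = ∑' m : ℕ, (m : ℝ≥0∞) * μ {m} := by
          refine tsum_congr fun m => ?_
          have h3 : ∀ n : ℕ, ({m : ℕ | n + 1 ≤ m}).indicator (fun m => μ {m}) m
              = if n < m then μ {m} else 0 := by
            intro n
            rw [Set.indicator_apply]
            simp [Nat.succ_le_iff]
          simp_rw [h3]
          rw [tsum_eq_sum (s := Finset.range m)
            (fun n hn => if_neg (by rw [Finset.mem_range] at hn; omega))]
          rw [Finset.sum_congr rfl (fun n hn => if_pos (Finset.mem_range.mp hn))]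
          rw [Finset.sum_const, Finset.card_range, nsmul_eq_mul]
  rw [hlim]
  constructor
  · intro h0
    by_contra htop
    rw [lt_top_iff_ne_top, not_ne_iff] at htop
    have h1 : ∑' n, P (A n) = ∞ := by rw [hsum, htop]
    have h2 := ProbabilityTheory.measure_limsup_eq_one hAm hiIndepSet h1
    rw [h0] at h2
    exact zero_ne_one h2
  · intro h
    apply MeasureTheory.measure_limsup_atTop_eq_zero
    rw [hsum]
    exact h.ne
end

section
/- Let μ be any probability distribution on ℕ with tail μ̄(j) := μ({j, j+1, ...}), and let (ξ_n, n ≥ 1) be i.i.d. random variables of law μ. For the IBM(μ) started from the barrier configuration X̂₀ one has X̂_n(1) = ∑_{j=1}^n 1{ξ_j ≥ j}, and if ∑_{j≥1} μ̄(j) = ∞, then X̂_n(1)/(∑_{j=1}^n μ̄(j)) → 1 almost surely as n → ∞ (so in particular X̂_∞(1) = ∞ almost surely). -/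
open MeasureTheory ProbabilityTheory Filter Set
open scoped ENNReal Topology Classical

section PartA

lemma tailSum_anti (X : Config) : Antitone (tailSum X) := by
  intro a b hab
  unfold tailSum
  refine iSup_le fun m => ?_
  exact le_trans (Finset.sum_le_sum_of_subset (Finset.Icc_subset_Icc_left hab))
    (le_iSup (fun m : ℤ => ∑ i ∈ Finset.Icc a m, X i) m)

lemma tailSum_of_bounded (X : Config) (m : ℤ) (h : ∀ i, m < i → X i = 0) (j : ℤ) :
    tailSum X j = ∑ i ∈ Finset.Icc j m, X i := by
  refine le_antisymm (iSup_le fun m' => ?_)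
    (le_iSup (fun m' => ∑ i ∈ Finset.Icc j m', X i) m)
  rcases le_total m' m with h' | h'
  · exact Finset.sum_le_sum_of_subset (Finset.Icc_subset_Icc_right h')
  · refine le_of_eq (Finset.sum_subset (Finset.Icc_subset_Icc_right h') fun x hx hx' => ?_).symm
    refine h x ?_
    simp only [Finset.mem_Icc] at hx hx'
    omega

lemma ibm_barrier_spec (ξ : ℕ → ℕ) (hξ : ∀ j, 1 ≤ ξ j) : ∀ n : ℕ,
    (∀ j : ℤ, j ≤ 0 → ibm barrier ξ n j = barrier j) ∧
    (∀ j : ℤ, (n : ℤ) < j → ibm barrier ξ n j = 0) ∧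
    (∑ i ∈ Finset.Icc (1 : ℤ) (n : ℤ), ibm barrier ξ n i = (n : ℕ∞)) ∧
    ibm barrier ξ n 1 = ((∑ j ∈ Finset.range n, if j + 1 ≤ ξ j then 1 else 0 : ℕ) : ℕ∞) := by
  intro n
  induction n with
  | zero =>
    refine ⟨fun j _ => rfl, fun j hj => ?_, ?_, ?_⟩
    · show barrier j = 0
      simp only [barrier, if_neg (by omega : j ≠ 0)]
    · simp [ibm]
    · show barrier 1 = _
      simp [barrier]
  | succ n IH =>
    obtain ⟨h0, hb, hc, h1⟩ := IH
    set X := ibm barrier ξ n with hX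
    have hXtop : X 0 = ⊤ := by simpa [barrier] using h0 0 le_rfl
    have htS : ∀ j : ℤ, tailSum X j = ∑ i ∈ Finset.Icc j (n : ℤ), X i :=
      tailSum_of_bounded X n hb
    have ht_le0 : ∀ j : ℤ, j ≤ 0 → tailSum X j = ⊤ := by
      intro j hj
      refine top_le_iff.mp ?_
      rw [← hXtop]
      refine le_trans (Finset.single_le_sum (f := fun i => X i) (fun i _ => zero_le) ?_)
        (le_iSup (fun m => ∑ i ∈ Finset.Icc j m, X i) 0)
      simp only [Finset.mem_Icc]; omega
    have ht1 : tailSum X 1 = (n : ℕ∞) := by rw [htS]; exact hc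
    have tA : ∀ j : ℤ, (n : ℤ) < j → tailSum X j = 0 := by
      intro j hj
      rw [htS, Finset.Icc_eq_empty (by omega), Finset.sum_empty]
    set a := ξ n with haa
    have ha : 1 ≤ a := hξ n
    have ha0 : ¬ ((a : ℕ∞) ≤ 0) := by
      simp only [nonpos_iff_eq_zero, Nat.cast_eq_zero]
      omega
    have hstep : ibm barrier ξ (n + 1) = Phi a X := rfl
    have hA1 : (∀ j : ℤ, j ≤ 0 → ibm barrier ξ (n+1) j = barrier j) := by
      intro j hj
      rw [hstep]
      show X j + _ = _
      rw [if_neg, add_zero]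
      · exact h0 j hj
      · rw [ht_le0 j hj]
        simp
    have hA2 : (∀ j : ℤ, ((n:ℤ) + 1 < j) → ibm barrier ξ (n+1) j = 0) := by
      intro j hj
      rw [hstep]
      show X j + _ = 0
      rw [if_neg, add_zero]
      · exact hb j (by omega)
      · rw [tA (j - 1) (by omega)]
        exact fun h => ha0 h.1
    -- the indicator analysis
    set A : ℤ → Prop := fun j => (a : ℕ∞) ≤ tailSum X j with hAdef
    have hT : ((n : ℤ) + 1) ∈ (Finset.Icc (1 : ℤ) ((n : ℤ) + 1)).filter (fun j => ¬ A j) := by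
      refine Finset.mem_filter.mpr ⟨Finset.mem_Icc.mpr (by omega), ?_⟩
      simp only [hAdef]
      rw [tA _ (by omega)]
      exact ha0
    set T := (Finset.Icc (1 : ℤ) ((n : ℤ) + 1)).filter (fun j => ¬ A j) with hTdef
    have hTne : T.Nonempty := ⟨_, hT⟩
    set j₀ := T.min' hTne with hj₀def
    have hj₀T : j₀ ∈ Finset.Icc (1:ℤ) ((n:ℤ)+1) ∧ ¬ A j₀ := Finset.mem_filter.mp (T.min'_mem hTne)
    rw [Finset.mem_Icc] at hj₀T
    have hmin : ∀ j : ℤ, 1 ≤ j → j ≤ (n:ℤ) + 1 → j < j₀ → A j := by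
      intro j hj1 hj2 hjlt
      by_contra hnA
      have : j ∈ T := by rw [hTdef]; exact Finset.mem_filter.mpr ⟨Finset.mem_Icc.mpr ⟨hj1, hj2⟩, hnA⟩
      exact absurd (T.min'_le j this) (by omega)
    have key : ∀ j ∈ Finset.Icc (1 : ℤ) ((n : ℤ) + 1),
        (if (a : ℕ∞) ≤ tailSum X (j - 1) ∧ ¬ (a : ℕ∞) ≤ tailSum X j then (1 : ℕ∞) else 0)
          = if j = j₀ then 1 else 0 := by
      intro j hj
      rw [Finset.mem_Icc] at hj
      rcases lt_trichotomy j j₀ with hlt | heq | hgt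
      · rw [if_neg, if_neg (by omega)]
        intro hcond
        exact hcond.2 (hmin j hj.1 hj.2 hlt)
      · have hnotAj : ¬ (a : ℕ∞) ≤ tailSum X j := heq ▸ hj₀T.2
        have hAj1 : (a : ℕ∞) ≤ tailSum X (j - 1) := by
          rcases eq_or_lt_of_le hj.1 with h1 | h1
          · rw [← h1]
            have h110 : (1 : ℤ) - 1 = 0 := by norm_num
            rw [h110, ht_le0 0 le_rfl]
            exact le_top
          · exact hmin (j - 1) (by omega) (by omega) (by omega)
        rw [if_pos ⟨hAj1, hnotAj⟩, if_pos heq]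
      · rw [if_neg, if_neg (by omega)]
        intro hcond
        refine hj₀T.2 (le_trans hcond.1 (tailSum_anti X (by omega : j₀ ≤ j - 1)))
    have hsum' : ∑ i ∈ Finset.Icc (1:ℤ) ((n:ℤ)+1), X i = (n : ℕ∞) := by
      rw [← hc]
      refine (Finset.sum_subset (Finset.Icc_subset_Icc_right (by omega)) fun x hx hx' => ?_).symm
      simp only [Finset.mem_Icc] at hx hx'
      exact hb x (by omega)
    have hA3 : ∑ i ∈ Finset.Icc (1:ℤ) ((n:ℤ)+1), ibm barrier ξ (n+1) i = ((n:ℕ∞) + 1) := by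
      rw [hstep]
      show ∑ i ∈ Finset.Icc (1:ℤ) ((n:ℤ)+1), (X i + _) = _
      rw [Finset.sum_add_distrib, hsum', Finset.sum_congr rfl key, Finset.sum_ite_eq']
      rw [if_pos (Finset.mem_Icc.mpr ⟨hj₀T.1.1, hj₀T.1.2⟩)]
    have hA4 : ibm barrier ξ (n+1) 1
        = ((∑ j ∈ Finset.range (n+1), if j + 1 ≤ ξ j then 1 else 0 : ℕ) : ℕ∞) := by
      rw [hstep]
      show X 1 + _ = _
      have h11 : (1 : ℤ) - 1 = 0 := by norm_num
      rw [h11, ht_le0 0 le_rfl, ht1, h1, Finset.sum_range_succ]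
      have hcast : ¬ ((a:ℕ∞) ≤ (n:ℕ∞)) ↔ n + 1 ≤ ξ n := by
        rw [Nat.cast_le, haa]; omega
      by_cases hcond : n + 1 ≤ ξ n
      · rw [if_pos ⟨le_top, hcast.mpr hcond⟩, if_pos hcond]
        push_cast
        ring
      · rw [if_neg (fun hh => hcond (hcast.mp hh.2)), if_neg hcond]
        push_cast
        ring
    refine ⟨hA1, fun j hj => hA2 j (by push_cast; omega), ?_, hA4⟩
    · push_cast
      exact hA3

end PartA

section Sandwich

lemma sandwich_tendsto (S Q : ℕ → ℝ) (N K : ℕ → ℕ)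
    (hS : Monotone S) (hQ : Monotone Q) (hS0 : ∀ n, 0 ≤ S n)
    (hNK1 : ∀ n, N (K n) ≤ n) (hNK2 : ∀ n, n < N (K n + 1))
    (hlb : ∀ k : ℕ, 1 ≤ k → (k : ℝ)^2 ≤ Q (N k))
    (hub : ∀ k : ℕ, 1 ≤ k → Q (N k) < (k : ℝ)^2 + 1)
    (hK : Filter.Tendsto K atTop atTop)
    (hr : Filter.Tendsto (fun k => S (N k) / Q (N k)) atTop (𝓝 1)) :
    Filter.Tendsto (fun n => S n / Q n) atTop (𝓝 1) := by
  set q : ℕ → ℝ := fun k => (((k:ℝ)+1)^2 + 1) / (k:ℝ)^2 with hqdef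
  have hq1 : Tendsto q atTop (𝓝 1) := by
    have h0 : Tendsto (fun k : ℕ => 1/(k:ℝ)) atTop (𝓝 0) := tendsto_one_div_atTop_nhds_zero_nat
    have hc : Tendsto (fun x : ℝ => (1 + x)^2 + x^2) (𝓝 0) (𝓝 1) := by
      have hcont : Continuous (fun x : ℝ => (1 + x)^2 + x^2) := by continuity
      have h := hcont.tendsto 0
      norm_num at h
      exact h
    refine Tendsto.congr' ?_ (hc.comp h0)
    filter_upwards [eventually_ge_atTop 1] with k hk
    have hk0 : (k:ℝ) ≠ 0 := by
      have : (1:ℝ) ≤ (k:ℝ) := by exact_mod_cast hk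
      linarith
    simp only [Function.comp_apply, hqdef]
    field_simp
  have hq0 : ∀ k : ℕ, 1 ≤ k → 0 < q k := by
    intro k hk
    have : (1:ℝ) ≤ (k:ℝ) := by exact_mod_cast hk
    have h2 : (0:ℝ) < (k:ℝ)^2 := by positivity
    have h3 : (0:ℝ) < ((k:ℝ)+1)^2 + 1 := by positivity
    exact div_pos h3 h2
  have hQpos : ∀ k : ℕ, 1 ≤ k → 0 < Q (N k) := by
    intro k hk
    have : (1:ℝ) ≤ (k:ℝ) := by exact_mod_cast hk
    have : (0:ℝ) < (k:ℝ)^2 := by positivity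
    exact lt_of_lt_of_le this (hlb k hk)
  have e1 : ∀ k : ℕ, 1 ≤ k → Q (N (k+1)) ≤ q k * Q (N k) := by
    intro k hk
    have hk0 : ((k:ℝ))^2 ≠ 0 := by
      have : (1:ℝ) ≤ (k:ℝ) := by exact_mod_cast hk
      positivity
    have h1 : Q (N (k+1)) < ((k:ℝ)+1)^2 + 1 := by
      have := hub (k+1) (by omega)
      push_cast at this
      linarith
    have h2 : q k * ((k:ℝ))^2 = ((k:ℝ)+1)^2 + 1 := by
      simp only [hqdef]
      field_simp
    have h3 : q k * ((k:ℝ))^2 ≤ q k * Q (N k) :=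
      mul_le_mul_of_nonneg_left (hlb k hk) (hq0 k hk).le
    linarith
  have hkey : ∀ᶠ n in atTop,
      S (N (K n)) / Q (N (K n)) / q (K n) ≤ S n / Q n ∧
      S n / Q n ≤ S (N (K n + 1)) / Q (N (K n + 1)) * q (K n) := by
    filter_upwards [hK.eventually_ge_atTop 1] with n hKn
    have hQn : 0 < Q n := lt_of_lt_of_le (hQpos _ hKn) (hQ (hNK1 n))
    have hQk : 0 < Q (N (K n)) := hQpos _ hKn
    have hQk1 : 0 < Q (N (K n + 1)) := hQpos _ (by omega)
    have hq0' : 0 < q (K n) := hq0 _ hKn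
    constructor
    · rw [div_div, div_le_div_iff₀ (by positivity) hQn]
      have hQle : Q n ≤ q (K n) * Q (N (K n)) :=
        le_trans (hQ (le_of_lt (hNK2 n))) (e1 _ hKn)
      calc S (N (K n)) * Q n ≤ S n * (q (K n) * Q (N (K n))) :=
            mul_le_mul (hS (hNK1 n)) hQle hQn.le (hS0 _)
        _ = S n * (Q (N (K n)) * q (K n)) := by ring
    · rw [div_mul_eq_mul_div, div_le_div_iff₀ hQn hQk1]
      have hQle : Q (N (K n + 1)) ≤ q (K n) * Q n :=
        le_trans (e1 _ hKn) (mul_le_mul_of_nonneg_left (hQ (hNK1 n)) hq0'.le)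
      calc S n * Q (N (K n + 1)) ≤ S (N (K n + 1)) * (q (K n) * Q n) :=
            mul_le_mul (hS (le_of_lt (hNK2 n))) hQle hQk1.le (hS0 _)
        _ = S (N (K n + 1)) * q (K n) * Q n := by ring
  have hlow : Tendsto (fun n => S (N (K n)) / Q (N (K n)) / q (K n)) atTop (𝓝 1) := by
    have h := (hr.div hq1 one_ne_zero).comp hK
    norm_num at h
    exact h
  have hup : Tendsto (fun n => S (N (K n + 1)) / Q (N (K n + 1)) * q (K n)) atTop (𝓝 1) := by
    have hr1 : Tendsto (fun k => S (N (k+1)) / Q (N (k+1))) atTop (𝓝 1) :=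
      hr.comp (tendsto_add_atTop_nat 1)
    have h := (hr1.mul hq1).comp hK
    norm_num at h
    exact h
  exact tendsto_of_tendsto_of_tendsto_of_le_of_le' hlow hup
    (hkey.mono fun n h => h.1) (hkey.mono fun n h => h.2)

end Sandwich

section PartB

variable {Ω : Type*} [MeasurableSpace Ω]

lemma partB (P : Measure Ω) [IsProbabilityMeasure P]
    (μ : Measure ℕ) [IsProbabilityMeasure μ]
    (ξ : ℕ → Ω → ℕ) (hmeas : ∀ n, Measurable (ξ n))
    (hindep : iIndepFun ξ P)
    (hmap : ∀ n, P.map (ξ n) = μ)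
    (htsum : ∑' j : ℕ, tailμ μ (j + 1) = ⊤) :
    ∀ᵐ ω ∂P, Tendsto (fun n : ℕ =>
        (∑ j ∈ Finset.range n, if j + 1 ≤ ξ j ω then (1:ℝ) else 0)
        / (∑ j ∈ Finset.range n, (tailμ μ (j+1)).toReal)) atTop (𝓝 1) := by
  set p : ℕ → ℝ := fun j => (tailμ μ (j+1)).toReal with hpdef
  set Q : ℕ → ℝ := fun n => ∑ j ∈ Finset.range n, p j with hQdef
  set I : ℕ → Ω → ℝ := fun j ω => if j + 1 ≤ ξ j ω then (1:ℝ) else 0 with hIdef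
  set Sf : ℕ → Ω → ℝ := fun n => ∑ j ∈ Finset.range n, I j with hSdef
  have hp0 : ∀ j, 0 ≤ p j := fun j => ENNReal.toReal_nonneg
  have hp1 : ∀ j, p j ≤ 1 := by
    intro j
    have h1 : tailμ μ (j+1) ≤ 1 := prob_le_one
    have := ENNReal.toReal_mono ENNReal.one_ne_top h1
    simpa using this
  have hQ0 : ∀ n, 0 ≤ Q n := fun n => Finset.sum_nonneg fun j _ => hp0 j
  have hQmono : Monotone Q := by
    intro a b hab
    exact Finset.sum_le_sum_of_subset_of_nonneg (Finset.range_subset_range.mpr hab)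
      (fun j _ _ => hp0 j)
  have hQsucc : ∀ n, Q (n+1) = Q n + p n := fun n => Finset.sum_range_succ p n
  -- divergence of Q
  have hQtop : Tendsto Q atTop atTop := by
    have hne : ∀ j : ℕ, tailμ μ (j+1) ≠ ⊤ := fun j => measure_ne_top μ _
    have hQeq : ∀ n, Q n = (∑ j ∈ Finset.range n, tailμ μ (j+1)).toReal := by
      intro n
      simp only [hQdef, hpdef]
      exact (ENNReal.toReal_sum (fun a _ => hne a)).symm
    have htend := ENNReal.tendsto_nat_tsum (fun j => tailμ μ (j+1))
    rw [htsum] at htend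
    rw [tendsto_atTop]
    intro b
    have hev := htend.eventually (eventually_ge_nhds
      (show ENNReal.ofReal b < ⊤ from ENNReal.ofReal_lt_top))
    filter_upwards [hev] with n hn
    have hne : (∑ j ∈ Finset.range n, tailμ μ (j+1)) ≠ ⊤ := by
      exact (ENNReal.sum_lt_top.mpr (fun a _ => (measure_ne_top μ _).lt_top)).ne
    have h2 : (ENNReal.ofReal b).toReal ≤ Q n := by
      rw [hQeq]
      exact ENNReal.toReal_mono hne hn
    rcases le_total b 0 with hb | hb
    · exact le_trans hb (le_trans (by positivity) h2)
    · rwa [ENNReal.toReal_ofReal hb] at h2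
  -- measurability and moments
  have hgmeas : ∀ j, Measurable (fun x : ℕ => if j + 1 ≤ x then (1:ℝ) else 0) :=
    fun j => measurable_from_top
  have hImeas : ∀ j, Measurable (I j) := fun j => (hgmeas j).comp (hmeas j)
  have hImem : ∀ j, MemLp (I j) 2 P := by
    intro j
    refine MemLp.of_bound (hImeas j).aestronglyMeasurable 1 (ae_of_all _ fun ω => ?_)
    simp only [hIdef, Real.norm_eq_abs]
    split_ifs <;> norm_num
  have hA : ∀ j : ℕ, MeasurableSet {x : ℕ | j + 1 ≤ x} := fun j => trivial
  have hEI : ∀ j, P[I j] = p j := by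
    intro j
    have hind : I j = Set.indicator (ξ j ⁻¹' {x | j+1 ≤ x}) (fun _ => (1:ℝ)) := by
      funext ω
      simp [hIdef, Set.indicator_apply, Set.mem_preimage, Set.mem_setOf_eq]
    rw [hind, integral_indicator_const (1:ℝ) ((hmeas j) (hA j)), smul_eq_mul, mul_one]
    have : P (ξ j ⁻¹' {x | j+1 ≤ x}) = μ {x | j+1 ≤ x} := by
      rw [← hmap j, Measure.map_apply (hmeas j) (hA j)]
    rw [measureReal_def, this]
    rfl
  have hvar : ∀ j, variance (I j) P ≤ p j := by
    intro j
    have hsq : (I j)^2 = I j := by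
      funext ω
      simp only [Pi.pow_apply, hIdef]
      split_ifs <;> norm_num
    have h := variance_le_expectation_sq (μ := P) (hImeas j).aestronglyMeasurable
    rwa [hsq, hEI j] at h
  have hSmem : ∀ n, MemLp (Sf n) 2 P := fun n => memLp_finset_sum' _ (fun j _ => hImem j)
  have hES : ∀ n, P[Sf n] = Q n := by
    intro n
    have : P[Sf n] = ∫ ω, ∑ j ∈ Finset.range n, I j ω ∂P := by
      simp [hSdef, Finset.sum_apply]
    rw [this, integral_finset_sum _ (fun j _ => (hImem j).integrable one_le_two)]
    exact Finset.sum_congr rfl fun j _ => hEI j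
  have hiI : iIndepFun I P :=
    hindep.comp (fun j x => if j + 1 ≤ x then (1:ℝ) else 0) hgmeas
  have hvarS : ∀ n, variance (Sf n) P ≤ Q n := by
    intro n
    rw [hSdef, IndepFun.variance_sum (fun j _ => hImem j)
      (fun i _ j _ hij => hiI.indepFun hij)]
    exact Finset.sum_le_sum fun j _ => hvar j
  have hcheb : ∀ n, ∀ c : ℝ, 0 < c →
      P {ω | c ≤ |Sf n ω - Q n|} ≤ ENNReal.ofReal (Q n / c^2) := by
    intro n c hc
    have h := meas_ge_le_variance_div_sq (hSmem n) hc
    rw [hES n] at h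
    refine le_trans h (ENNReal.ofReal_le_ofReal ?_)
    gcongr
    exact hvarS n
  -- hitting times
  have hex : ∀ k : ℕ, ∃ n, (k:ℝ)^2 ≤ Q n := fun k => (hQtop.eventually_ge_atTop _).exists
  set N : ℕ → ℕ := fun k => Nat.find (hex k) with hNdef
  have hNlb : ∀ k : ℕ, (k:ℝ)^2 ≤ Q (N k) := fun k => Nat.find_spec (hex k)
  have hNub : ∀ k : ℕ, 1 ≤ k → Q (N k) < (k:ℝ)^2 + 1 := by
    intro k hk
    have hN0 : N k ≠ 0 := by
      intro h
      have h1 := hNlb k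
      rw [h] at h1
      have : Q 0 = 0 := by simp [hQdef]
      rw [this] at h1
      have : (1:ℝ) ≤ (k:ℝ) := by exact_mod_cast hk
      nlinarith
    obtain ⟨m, hm⟩ : ∃ m, N k = m + 1 := ⟨N k - 1, by omega⟩
    have hmin : ¬ (k:ℝ)^2 ≤ Q m := Nat.find_min (hex k) (show m < N k by omega)
    have h2 := hQsucc m
    have h3 := hp1 m
    rw [hm, h2]
    push_neg at hmin
    linarith
  set K : ℕ → ℕ := fun n => Nat.sqrt ⌊Q n⌋₊ with hKdef
  have hK1 : ∀ n, ((K n : ℝ))^2 ≤ Q n := by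
    intro n
    have h1 : K n ^ 2 ≤ ⌊Q n⌋₊ := Nat.sqrt_le' _
    have h2 : (⌊Q n⌋₊ : ℝ) ≤ Q n := Nat.floor_le (hQ0 n)
    have h3 : ((K n ^ 2 : ℕ) : ℝ) ≤ (⌊Q n⌋₊ : ℝ) := by exact_mod_cast h1
    push_cast at h3
    nlinarith
  have hK2 : ∀ n, Q n < ((K n : ℝ) + 1)^2 := by
    intro n
    have h1 : ⌊Q n⌋₊ < (K n + 1) ^ 2 := Nat.lt_succ_sqrt' _
    have h2 : Q n < (⌊Q n⌋₊ : ℝ) + 1 := Nat.lt_floor_add_one _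
    have h3 : ((⌊Q n⌋₊ : ℕ) : ℝ) + 1 ≤ (((K n + 1) ^ 2 : ℕ) : ℝ) := by exact_mod_cast h1
    push_cast at h3
    nlinarith
  have hNK1 : ∀ n, N (K n) ≤ n := fun n => Nat.find_min' (hex (K n)) (hK1 n)
  have hNK2 : ∀ n, n < N (K n + 1) := by
    intro n
    by_contra h
    push_neg at h
    have h1 : Q (N (K n + 1)) ≤ Q n := hQmono h
    have h2 := hNlb (K n + 1)
    have h3 := hK2 n
    push_cast at h2
    linarith
  have hKtop : Tendsto K atTop atTop := by
    rw [tendsto_atTop]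
    intro b
    filter_upwards [hQtop.eventually_ge_atTop ((b*b : ℕ) : ℝ)] with n hn
    have h1 : (b*b : ℕ) ≤ ⌊Q n⌋₊ := Nat.le_floor hn
    exact Nat.le_sqrt.mpr h1
  -- Borel-Cantelli along the subsequence
  have hQNpos : ∀ k : ℕ, 1 ≤ k → 0 < Q (N k) := by
    intro k hk
    have : (1:ℝ) ≤ (k:ℝ) := by exact_mod_cast hk
    have h2 : (0:ℝ) < (k:ℝ)^2 := by positivity
    exact lt_of_lt_of_le h2 (hNlb k)
  have hbc : ∀ m : ℕ, ∀ᵐ ω ∂P, ∀ᶠ k in atTop,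
      |Sf (N k) ω - Q (N k)| < Q (N k) / (m+1) := by
    intro m
    set bad : ℕ → Set Ω := fun k => {ω | Q (N k) / (m+1) ≤ |Sf (N k) ω - Q (N k)|} with hbaddef
    have hbound : ∀ k : ℕ, 1 ≤ k →
        P (bad k) ≤ ENNReal.ofReal (((m:ℝ)+1)^2 / (k:ℝ)^2) := by
      intro k hk
      have hc : 0 < Q (N k) / (m+1) := by
        apply div_pos (hQNpos k hk)
        positivity
      refine le_trans (hcheb (N k) _ hc) (ENNReal.ofReal_le_ofReal ?_)
      have hQpos := hQNpos k hk
      have heq : Q (N k) / (Q (N k) / (m+1))^2 = ((m:ℝ)+1)^2 / Q (N k) := by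
        field_simp
      rw [heq]
      have hk2 : (0:ℝ) < (k:ℝ)^2 := by
        have : (1:ℝ) ≤ (k:ℝ) := by exact_mod_cast hk
        positivity
      gcongr
      exact hNlb k
    have hsummable : Summable (fun k : ℕ => ((m:ℝ)+1)^2 / ((k:ℝ)+1)^2) := by
      have h1 : Summable (fun k : ℕ => 1 / ((k:ℝ))^2) := by
        rw [Real.summable_one_div_nat_pow]
        omega
      have h2 := (summable_nat_add_iff 1).mpr h1
      have h3 := h2.mul_left (((m:ℝ)+1)^2)
      refine h3.congr fun k => ?_
      push_cast
      ring
    have htsumfin : (∑' k, P (bad k)) ≠ ⊤ := by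
      rw [tsum_eq_zero_add' ENNReal.summable]
      refine ENNReal.add_ne_top.mpr ⟨(measure_ne_top P _), ?_⟩
      have h1 : (∑' k : ℕ, P (bad (k+1))) ≤
          ∑' k : ℕ, ENNReal.ofReal (((m:ℝ)+1)^2 / ((k:ℝ)+1)^2) := by
        refine ENNReal.tsum_le_tsum fun k => ?_
        have := hbound (k+1) (by omega)
        push_cast at this ⊢
        convert this using 3
      have h2 : (∑' k : ℕ, ENNReal.ofReal (((m:ℝ)+1)^2 / ((k:ℝ)+1)^2)) ≠ ⊤ := by
        rw [← ENNReal.ofReal_tsum_of_nonneg (fun k => by positivity) hsummable]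
        exact ENNReal.ofReal_ne_top
      exact (lt_of_le_of_lt h1 h2.lt_top).ne
    filter_upwards [ae_eventually_notMem htsumfin] with ω hω
    filter_upwards [hω] with k hk
    simpa [hbaddef] using hk
  have hae := ae_all_iff.mpr hbc
  filter_upwards [hae] with ω hω
  -- convergence along the subsequence
  have hrω : Tendsto (fun k => Sf (N k) ω / Q (N k)) atTop (𝓝 1) := by
    rw [Metric.tendsto_nhds]
    intro ε hε
    obtain ⟨m, hm⟩ := exists_nat_one_div_lt hε
    filter_upwards [hω m, eventually_ge_atTop 1] with k hk hk1
    have hQpos := hQNpos k hk1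
    rw [Real.dist_eq]
    have heq : |Sf (N k) ω / Q (N k) - 1| = |Sf (N k) ω - Q (N k)| / Q (N k) := by
      rw [show Sf (N k) ω / Q (N k) - 1 = (Sf (N k) ω - Q (N k)) / Q (N k) by field_simp]
      rw [abs_div, abs_of_pos hQpos]
    rw [heq]
    have h2 : |Sf (N k) ω - Q (N k)| / Q (N k) < (Q (N k) / (m+1)) / Q (N k) := by
      gcongr
    have h3 : (Q (N k) / (m+1)) / Q (N k) = 1 / ((m:ℝ)+1) := by
      field_simp
    rw [h3] at h2
    calc |Sf (N k) ω - Q (N k)| / Q (N k) < 1 / ((m:ℝ)+1) := h2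
      _ < ε := by exact_mod_cast hm
  -- sandwich
  have hSapp : ∀ n, Sf n ω = ∑ j ∈ Finset.range n, I j ω := by
    intro n
    simp [hSdef, Finset.sum_apply]
  have hSmono : Monotone (fun n => Sf n ω) := by
    intro a b hab
    simp only [hSapp]
    refine Finset.sum_le_sum_of_subset_of_nonneg (Finset.range_subset_range.mpr hab) fun j _ _ => ?_
    simp only [hIdef]
    split_ifs <;> norm_num
  have hS0 : ∀ n, 0 ≤ Sf n ω := by
    intro n
    rw [hSapp]
    refine Finset.sum_nonneg fun j _ => ?_
    simp only [hIdef]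
    split_ifs <;> norm_num
  have hfinal := sandwich_tendsto (fun n => Sf n ω) Q N K hSmono hQmono hS0 hNK1 hNK2
    (fun k _ => hNlb k) hNub hKtop hrω
  refine hfinal.congr fun n => ?_
  congr 1
  exact hSapp n
end PartB


lemma Qdiv (μ : Measure ℕ) [IsProbabilityMeasure μ]
    (htsum : ∑' j : ℕ, tailμ μ (j + 1) = ⊤) :
    Tendsto (fun n => ∑ j ∈ Finset.range n, (tailμ μ (j+1)).toReal) atTop atTop := by
  have hne : ∀ j : ℕ, tailμ μ (j+1) ≠ ⊤ := fun j => measure_ne_top μ _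
  have hQeq : ∀ n : ℕ, ∑ j ∈ Finset.range n, (tailμ μ (j+1)).toReal
      = (∑ j ∈ Finset.range n, tailμ μ (j+1)).toReal :=
    fun n => (ENNReal.toReal_sum (fun a _ => hne a)).symm
  have htend := ENNReal.tendsto_nat_tsum (fun j => tailμ μ (j+1))
  rw [htsum] at htend
  rw [tendsto_atTop]
  intro b
  have hev := htend.eventually (eventually_ge_nhds
    (show ENNReal.ofReal b < ⊤ from ENNReal.ofReal_lt_top))
  filter_upwards [hev] with n hn
  have hfin : (∑ j ∈ Finset.range n, tailμ μ (j+1)) ≠ ⊤ :=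
    (ENNReal.sum_lt_top.mpr (fun a _ => (hne a).lt_top)).ne
  have h2 : (ENNReal.ofReal b).toReal ≤ (∑ j ∈ Finset.range n, tailμ μ (j+1)).toReal :=
    ENNReal.toReal_mono hfin hn
  rw [← hQeq] at h2
  rcases le_total b 0 with hb | hb
  · exact le_trans hb (le_trans (by positivity) h2)
  · rwa [ENNReal.toReal_ofReal hb] at h2

/-- For any law `μ` and the IBM(μ) started from the barrier configuration,
a.s. `X̂_n(1) = ∑_{j=1}^n 1_{ξ_j ≥ j}` for all `n` (here `ξ_j` is the `j`-th sample, i.e.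
the driving variable of step `j`), and if `∑_{j ≥ 1} μ̄(j) = ∞`, then
`X̂_n(1) / ∑_{j=1}^n μ̄(j) → 1` a.s., so in particular `X̂_∞(1) = ∞` a.s. -/
theorem stmt19 {Ω : Type*} [MeasurableSpace Ω] (P : Measure Ω) [IsProbabilityMeasure P]
    (μ : Measure ℕ) [IsProbabilityMeasure μ] (hμ0 : μ {0} = 0)
    (ξ : ℕ → Ω → ℕ) (hξ : IsIIDSeq P μ ξ) :
    (∀ᵐ ω ∂P, ∀ n : ℕ,
      ibm barrier (fun i => ξ i ω) n 1 =
        ((∑ j ∈ Finset.range n, if j + 1 ≤ ξ j ω then 1 else 0 : ℕ) : ℕ∞)) ∧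
    (∑' j : ℕ, tailμ μ (j + 1) = ⊤ →
      (∀ᵐ ω ∂P, Tendsto
        (fun n : ℕ => ((ibm barrier (fun i => ξ i ω) n 1).toNat : ℝ) /
          (∑ j ∈ Finset.Icc 1 n, (tailμ μ j).toReal))
        atTop (𝓝 1)) ∧
      (∀ᵐ ω ∂P, ibmLimit barrier (fun i => ξ i ω) 1 = ⊤)) := by
  obtain ⟨hmeas, hindep, hmap⟩ := hξ
  -- a.s. all samples are ≥ 1
  have h1as : ∀ᵐ ω ∂P, ∀ j : ℕ, 1 ≤ ξ j ω := by
    rw [ae_all_iff]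
    intro j
    have h0 : P (ξ j ⁻¹' {0}) = 0 := by
      rw [← Measure.map_apply (hmeas j) (MeasurableSet.singleton 0), hmap j]
      exact hμ0
    rw [ae_iff]
    refine measure_mono_null (fun ω hω => ?_) h0
    simp only [Set.mem_setOf_eq, not_le, Nat.lt_one_iff] at hω
    exact hω
  have hform : ∀ᵐ ω ∂P, ∀ n : ℕ,
      ibm barrier (fun i => ξ i ω) n 1 =
        ((∑ j ∈ Finset.range n, if j + 1 ≤ ξ j ω then 1 else 0 : ℕ) : ℕ∞) := by
    filter_upwards [h1as] with ω hω n
    exact (ibm_barrier_spec (fun i => ξ i ω) hω n).2.2.2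
  refine ⟨hform, fun htsum => ?_⟩
  have hQtop := Qdiv μ htsum
  have hpartB := partB P μ ξ hmeas hindep hmap htsum
  -- numerator and denominator conversions
  have hden : ∀ n : ℕ, (∑ j ∈ Finset.Icc 1 n, (tailμ μ j).toReal)
      = ∑ j ∈ Finset.range n, (tailμ μ (j+1)).toReal := by
    intro n
    rw [← Finset.Ico_add_one_right_eq_Icc, Finset.sum_Ico_eq_sum_range]
    simp [add_comm]
  have hnum : ∀ (ω : Ω) (n : ℕ),
      ((∑ j ∈ Finset.range n, if j + 1 ≤ ξ j ω then 1 else 0 : ℕ) : ℝ)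
      = ∑ j ∈ Finset.range n, (if j + 1 ≤ ξ j ω then (1:ℝ) else 0) := by
    intro ω n
    rw [Nat.cast_sum]
    exact Finset.sum_congr rfl fun j _ => by split_ifs <;> simp
  have hB1 : ∀ᵐ ω ∂P, Tendsto
      (fun n : ℕ => ((ibm barrier (fun i => ξ i ω) n 1).toNat : ℝ) /
        (∑ j ∈ Finset.Icc 1 n, (tailμ μ j).toReal)) atTop (𝓝 1) := by
    filter_upwards [hform, hpartB] with ω hω h2
    refine h2.congr fun n => ?_
    rw [hω n, ENat.toNat_coe, hnum ω n, hden n]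
  refine ⟨hB1, ?_⟩
  filter_upwards [hform, hpartB] with ω hω h2
  -- the numerator tends to infinity
  have hSr : Tendsto (fun n => ∑ j ∈ Finset.range n,
      (if j + 1 ≤ ξ j ω then (1:ℝ) else 0)) atTop atTop := by
    have hmul := Tendsto.pos_mul_atTop one_pos h2 hQtop
    refine Tendsto.congr' ?_ hmul
    filter_upwards [hQtop.eventually_gt_atTop 0] with n hn
    exact div_mul_cancel₀ _ hn.ne'
  set L := ibmLimit barrier (fun i => ξ i ω) 1 with hLdef
  rcases eq_top_or_lt_top L with htop | hlt
  · exact htop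
  exfalso
  have hub : ∀ m : ℕ, (m : ℕ∞) ≤ L := by
    intro m
    obtain ⟨n, hn⟩ := (hSr.eventually_ge_atTop (m : ℝ)).exists
    rw [← hnum ω n] at hn
    have hle : m ≤ (∑ j ∈ Finset.range n, if j + 1 ≤ ξ j ω then 1 else 0 : ℕ) := by
      exact_mod_cast hn
    refine le_trans ?_ (le_iSup (fun n => ibm barrier (fun i => ξ i ω) n 1) n)
    rw [hω n]
    exact_mod_cast hle
  have hc : ((L.toNat : ℕ) : ℕ∞) = L := ENat.coe_toNat hlt.ne
  have h3 := hub (L.toNat + 1)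
  rw [← hc] at h3
  simp only [ENat.toNat_coe] at h3
  rw [Nat.cast_le] at h3
  omega
end
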